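/- The set A_c of allowed chain configurations satisfies the Uniform Exterior Sphere property UES(α) with constant α = r_-²/(2 r_+ n √(2n)). -/

import Mathlib

open scoped RealInnerProductSpace

noncomputable section

variable {H : Type*} [NormedAddCommGroup H] [InnerProductSpace ℝ H]

/-- The set `N^D_{x,α}` of inward unit normal vectors to `D` at `x` with constant `α`. -/
def normalSet (D : Set H) (x : H) (α : ℝ) : Set H :=
  {v | ‖v‖ = 1 ∧ Metric.ball (x - α • v) α ∩ D = ∅}

/-- The set `N^D_x = ⋃_{α>0} N^D_{x,α}` of inward unit normal vectors to `D` at `x`. -/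
def normalCone (D : Set H) (x : H) : Set H :=
  ⋃ α ∈ Set.Ioi (0 : ℝ), normalSet D x α

/-- `D` satisfies the Uniform Exterior Sphere property with constant `α`. -/
def UES (D : Set H) (α : ℝ) : Prop :=
  ∀ x ∈ frontier D, normalCone D x = normalSet D x α ∧ (normalSet D x α).Nonempty

/-- `D` satisfies the Uniform Normal Cone property with constants `β`, `δ`. -/
def UNC (D : Set H) (β δ : ℝ) : Prop :=
  ∀ x ∈ frontier D, ∃ l : H, ‖l‖ = 1 ∧
    ∀ y ∈ frontier D, ‖y - x‖ ≤ δ → ∀ v ∈ normalCone D y, ⟪v, l⟫ ≥ Real.sqrt (1 - β ^ 2)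

/-- The configuration space `ℝ^{dn+2}` of chains of `n` particles in `ℝ^d` together with the
minimum and maximum bond lengths `(x̆₋, x̆₊)`, carrying the Euclidean (`L²`) norm. -/
abbrev CConf (d n : ℕ) : Type :=
  WithLp 2 ((PiLp 2 fun _ : Fin n => EuclideanSpace ℝ (Fin d)) × WithLp 2 (ℝ × ℝ))

variable {d n : ℕ}

/-- Position of the `i`-th particle of the chain. -/
def cC (x : CConf d n) (i : Fin n) : EuclideanSpace ℝ (Fin d) := x.fst i

/-- Minimum allowed bond length `x̆₋`. -/
def cMin (x : CConf d n) : ℝ := x.snd.fst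

/-- Maximum allowed bond length `x̆₊`. -/
def cMax (x : CConf d n) : ℝ := x.snd.snd

/-- Build a chain configuration from particle positions and the two bond-length bounds. -/
def mkC (f : Fin n → EuclideanSpace ℝ (Fin d)) (a b : ℝ) : CConf d n :=
  (WithLp.equiv 2 _).symm ((WithLp.equiv 2 _).symm f, (WithLp.equiv 2 _).symm (a, b))

/-- The set `A_c` of allowed chain configurations. -/
def Ac (d n : ℕ) (rm rp : ℝ) : Set (CConf d n) :=
  {x | rm ≤ cMin x ∧ cMin x ≤ cMax x ∧ cMax x ≤ rp ∧
    ∀ (i : Fin n) (h : (i : ℕ) + 1 < n),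
      cMin x ≤ ‖cC x i - cC x ⟨(i : ℕ) + 1, h⟩‖ ∧
        ‖cC x i - cC x ⟨(i : ℕ) + 1, h⟩‖ ≤ cMax x}

/-- The unit normal vector `n_{i−}(x)` to the constraint `|x_i − x_{i+1}| ≥ x̆₋`, at a
configuration `x` with `|x_i − x_{i+1}| = x̆₋ > 0`. -/
def cnm (x : CConf d n) (i : Fin n) (h : (i : ℕ) + 1 < n) : CConf d n :=
  mkC (fun k =>
      if k = i then (cMin x * Real.sqrt 3)⁻¹ • (cC x i - cC x ⟨(i : ℕ) + 1, h⟩)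
      else if k = ⟨(i : ℕ) + 1, h⟩ then
        (cMin x * Real.sqrt 3)⁻¹ • (cC x ⟨(i : ℕ) + 1, h⟩ - cC x i)
      else 0)
    (-(Real.sqrt 3)⁻¹) 0

/-- The unit normal vector `n_{i+}(x)` to the constraint `|x_i − x_{i+1}| ≤ x̆₊`, at a
configuration `x` with `|x_i − x_{i+1}| = x̆₊ > 0`. -/
def cnp (x : CConf d n) (i : Fin n) (h : (i : ℕ) + 1 < n) : CConf d n :=
  mkC (fun k =>
      if k = i then (cMax x * Real.sqrt 3)⁻¹ • (cC x ⟨(i : ℕ) + 1, h⟩ - cC x i)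
      else if k = ⟨(i : ℕ) + 1, h⟩ then
        (cMax x * Real.sqrt 3)⁻¹ • (cC x i - cC x ⟨(i : ℕ) + 1, h⟩)
      else 0)
    0 (Real.sqrt 3)⁻¹

/-- The unit normal vector `n₋ = (0,…,0,1,0)` to the constraint `x̆₋ ≥ r₋`. -/
def cnmin (d n : ℕ) : CConf d n := mkC 0 1 0

/-- The unit normal vector `n₊ = (0,…,0,0,−1)` to the constraint `x̆₊ ≤ r₊`. -/
def cnmax (d n : ℕ) : CConf d n := mkC 0 0 (-1)

/-- The unit normal vector `n₌ = (0,…,0,−1/√2,1/√2)` to the constraint `x̆₋ ≤ x̆₊`. -/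
def cneq (d n : ℕ) : CConf d n := mkC 0 (-(Real.sqrt 2)⁻¹) (Real.sqrt 2)⁻¹

end
namespace S15

open Finset

noncomputable section

variable {d n : ℕ}

/-- Bond vector `x_i - x_{i+1}` (or `0` if `i+1 ≥ n`). -/
def bv (x : CConf d n) (i : Fin n) : EuclideanSpace ℝ (Fin d) :=
  if h : (i : ℕ) + 1 < n then cC x i - cC x ⟨(i : ℕ) + 1, h⟩ else 0

lemma bv_of_lt (x : CConf d n) (i : Fin n) (h : (i : ℕ) + 1 < n) :
    bv x i = cC x i - cC x ⟨(i : ℕ) + 1, h⟩ := dif_pos h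

lemma cC_add (x y : CConf d n) (i : Fin n) : cC (x + y) i = cC x i + cC y i := rfl
lemma cC_sub (x y : CConf d n) (i : Fin n) : cC (x - y) i = cC x i - cC y i := rfl
lemma cC_smul (t : ℝ) (x : CConf d n) (i : Fin n) : cC (t • x) i = t • cC x i := rfl
lemma cMin_add (x y : CConf d n) : cMin (x + y) = cMin x + cMin y := rfl
lemma cMin_sub (x y : CConf d n) : cMin (x - y) = cMin x - cMin y := rfl
lemma cMin_smul (t : ℝ) (x : CConf d n) : cMin (t • x) = t * cMin x := rfl
lemma cMax_add (x y : CConf d n) : cMax (x + y) = cMax x + cMax y := rfl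
lemma cMax_sub (x y : CConf d n) : cMax (x - y) = cMax x - cMax y := rfl
lemma cMax_smul (t : ℝ) (x : CConf d n) : cMax (t • x) = t * cMax x := rfl
lemma cC_mkC (f : Fin n → EuclideanSpace ℝ (Fin d)) (a b : ℝ) (i : Fin n) :
    cC (mkC f a b) i = f i := rfl
lemma cMin_mkC (f : Fin n → EuclideanSpace ℝ (Fin d)) (a b : ℝ) : cMin (mkC f a b) = a := rfl
lemma cMax_mkC (f : Fin n → EuclideanSpace ℝ (Fin d)) (a b : ℝ) : cMax (mkC f a b) = b := rfl

lemma bv_add (x y : CConf d n) (i : Fin n) : bv (x + y) i = bv x i + bv y i := by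
  unfold bv; split_ifs with h
  · simp [cC_add]; abel
  · simp

lemma bv_sub (x y : CConf d n) (i : Fin n) : bv (x - y) i = bv x i - bv y i := by
  unfold bv; split_ifs with h
  · simp [cC_sub]; abel
  · simp

lemma bv_smul (t : ℝ) (x : CConf d n) (i : Fin n) : bv (t • x) i = t • bv x i := by
  unfold bv; split_ifs with h
  · simp [cC_smul, smul_sub]
  · simp

/-- Inner product formula on the configuration space. -/
lemma cinner (z w : CConf d n) :
    ⟪z, w⟫ = (∑ i, ⟪cC z i, cC w i⟫) + (cMin z * cMin w + cMax z * cMax w) := by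
  rw [WithLp.prod_inner_apply, PiLp.inner_apply, WithLp.prod_inner_apply]
  simp [cC, cMin, cMax, RCLike.inner_apply, PiLp.inner_apply]; ring

lemma cnormsq (z : CConf d n) :
    ‖z‖ ^ 2 = (∑ i, ‖cC z i‖ ^ 2) + (cMin z ^ 2 + cMax z ^ 2) := by
  have h := cinner z z
  rw [real_inner_self_eq_norm_sq] at h
  rw [h]
  simp only [real_inner_self_eq_norm_sq]
  ring

lemma abs_cMin_le_norm (z : CConf d n) : |cMin z| ≤ ‖z‖ := by
  have h := cnormsq z
  have h1 : cMin z ^ 2 ≤ ‖z‖ ^ 2 := by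
    have : (0:ℝ) ≤ ∑ i, ‖cC z i‖ ^ 2 := Finset.sum_nonneg fun i _ => sq_nonneg _
    nlinarith [sq_nonneg (cMax z)]
  calc |cMin z| = Real.sqrt (cMin z ^ 2) := (Real.sqrt_sq_eq_abs _).symm
  _ ≤ Real.sqrt (‖z‖ ^ 2) := Real.sqrt_le_sqrt h1
  _ = ‖z‖ := Real.sqrt_sq (norm_nonneg _)

lemma abs_cMax_le_norm (z : CConf d n) : |cMax z| ≤ ‖z‖ := by
  have h := cnormsq z
  have h1 : cMax z ^ 2 ≤ ‖z‖ ^ 2 := by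
    have : (0:ℝ) ≤ ∑ i, ‖cC z i‖ ^ 2 := Finset.sum_nonneg fun i _ => sq_nonneg _
    nlinarith [sq_nonneg (cMin z)]
  calc |cMax z| = Real.sqrt (cMax z ^ 2) := (Real.sqrt_sq_eq_abs _).symm
  _ ≤ Real.sqrt (‖z‖ ^ 2) := Real.sqrt_le_sqrt h1
  _ = ‖z‖ := Real.sqrt_sq (norm_nonneg _)

lemma norm_cC_le_norm (z : CConf d n) (i : Fin n) : ‖cC z i‖ ≤ ‖z‖ := by
  have h := cnormsq z
  have h1 : ‖cC z i‖ ^ 2 ≤ ‖z‖ ^ 2 := by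
    have : ‖cC z i‖ ^ 2 ≤ ∑ k, ‖cC z k‖ ^ 2 :=
      Finset.single_le_sum (fun k _ => sq_nonneg ‖cC z k‖) (Finset.mem_univ i)
    nlinarith [sq_nonneg (cMin z), sq_nonneg (cMax z)]
  have := Real.sqrt_le_sqrt h1
  rwa [Real.sqrt_sq (norm_nonneg _), Real.sqrt_sq (norm_nonneg _)] at this

lemma norm_bv_le (z : CConf d n) (i : Fin n) : ‖bv z i‖ ≤ 2 * ‖z‖ := by
  unfold bv; split_ifs with h
  · calc ‖cC z i - cC z ⟨(i:ℕ)+1, h⟩‖ ≤ ‖cC z i‖ + ‖cC z ⟨(i:ℕ)+1, h⟩‖ := norm_sub_le _ _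
    _ ≤ 2 * ‖z‖ := by have := norm_cC_le_norm z i; have := norm_cC_le_norm z ⟨(i:ℕ)+1, h⟩; linarith
  · rw [norm_zero]; positivity

/-- Splitting a sum with two designated indices. -/
lemma sum_two {M : Type*} [AddCommMonoid M] {i j : Fin n} (hij : i ≠ j)
    (A B : M) (g : Fin n → M) (hg : ∀ k, g k = if k = i then A else if k = j then B else 0) :
    ∑ k, g k = A + B := by
  have : ∀ k, g k = (if k = i then A else 0) + (if k = j then B else 0) := by
    intro k
    rw [hg k]
    rcases eq_or_ne k i with h1 | h1
    · subst h1; simp [hij]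
    · rcases eq_or_ne k j with h2 | h2
      · subst h2; simp [h1]
      · simp [h1, h2]
  rw [Finset.sum_congr rfl fun k _ => this k, Finset.sum_add_distrib]
  simp

end
end S15
namespace S15
noncomputable section
variable {d n : ℕ}

lemma ne_succ (i : Fin n) (h : (i : ℕ) + 1 < n) : i ≠ ⟨(i : ℕ) + 1, h⟩ := by
  intro he
  have := congrArg (Fin.val) he
  simp at this

lemma cMin_cnm (x : CConf d n) (i : Fin n) (h : (i:ℕ)+1 < n) :
    cMin (cnm x i h) = -(Real.sqrt 3)⁻¹ := rfl
lemma cMax_cnm (x : CConf d n) (i : Fin n) (h : (i:ℕ)+1 < n) : cMax (cnm x i h) = 0 := rfl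
lemma cMin_cnp (x : CConf d n) (i : Fin n) (h : (i:ℕ)+1 < n) : cMin (cnp x i h) = 0 := rfl
lemma cMax_cnp (x : CConf d n) (i : Fin n) (h : (i:ℕ)+1 < n) :
    cMax (cnp x i h) = (Real.sqrt 3)⁻¹ := rfl

/-- Pairing of `cnm` with an arbitrary configuration. -/
lemma inner_cnm (x : CConf d n) (i : Fin n) (h : (i : ℕ) + 1 < n) (w : CConf d n) :
    ⟪cnm x i h, w⟫ = (cMin x * Real.sqrt 3)⁻¹ * ⟪bv x i, bv w i⟫
      - (Real.sqrt 3)⁻¹ * cMin w := by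
  rw [cinner]
  have e1 : (∑ k, (⟪cC (cnm x i h) k, cC w k⟫ : ℝ)) =
      ⟪(cMin x * Real.sqrt 3)⁻¹ • bv x i, cC w i⟫
      + ⟪-((cMin x * Real.sqrt 3)⁻¹ • bv x i), cC w ⟨(i:ℕ)+1, h⟩⟫ := by
    refine sum_two (ne_succ i h) _ _ _ (fun k => ?_)
    rw [show cC (cnm x i h) k = _ from cC_mkC _ _ _ k]
    rcases eq_or_ne k i with h1 | h1
    · subst h1; rw [if_pos rfl, if_pos rfl, bv_of_lt x k h]
    · rw [if_neg h1, if_neg h1]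
      rcases eq_or_ne k (⟨(i:ℕ)+1, h⟩ : Fin n) with h2 | h2
      · subst h2; rw [if_pos rfl, if_pos rfl, bv_of_lt x i h]
        congr 1
        module
      · rw [if_neg h2, if_neg h2, inner_zero_left]
  rw [e1, cMin_cnm, cMax_cnm, bv_of_lt x i h, bv_of_lt w i h]
  rw [real_inner_smul_left, inner_neg_left, real_inner_smul_left, inner_sub_right]
  ring

/-- Pairing of `cnp` with an arbitrary configuration. -/
lemma inner_cnp (x : CConf d n) (i : Fin n) (h : (i : ℕ) + 1 < n) (w : CConf d n) :
    ⟪cnp x i h, w⟫ = -((cMax x * Real.sqrt 3)⁻¹ * ⟪bv x i, bv w i⟫)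
      + (Real.sqrt 3)⁻¹ * cMax w := by
  rw [cinner]
  have e1 : (∑ k, (⟪cC (cnp x i h) k, cC w k⟫ : ℝ)) =
      ⟪-((cMax x * Real.sqrt 3)⁻¹ • bv x i), cC w i⟫
      + ⟪(cMax x * Real.sqrt 3)⁻¹ • bv x i, cC w ⟨(i:ℕ)+1, h⟩⟫ := by
    refine sum_two (ne_succ i h) _ _ _ (fun k => ?_)
    rw [show cC (cnp x i h) k = _ from cC_mkC _ _ _ k]
    rcases eq_or_ne k i with h1 | h1
    · subst h1; rw [if_pos rfl, if_pos rfl, bv_of_lt x k h]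
      congr 1
      module
    · rw [if_neg h1, if_neg h1]
      rcases eq_or_ne k (⟨(i:ℕ)+1, h⟩ : Fin n) with h2 | h2
      · subst h2; rw [if_pos rfl, if_pos rfl, bv_of_lt x i h]
      · rw [if_neg h2, if_neg h2, inner_zero_left]
  rw [e1, cMin_cnp, cMax_cnp, bv_of_lt x i h, bv_of_lt w i h]
  rw [real_inner_smul_left, inner_neg_left, real_inner_smul_left, inner_sub_right]
  ring

lemma inner_cnmin (w : CConf d n) : ⟪cnmin d n, w⟫ = cMin w := by
  rw [cinner]; simp [cnmin, cC_mkC, cMin_mkC, cMax_mkC]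

lemma inner_cnmax (w : CConf d n) : ⟪cnmax d n, w⟫ = -cMax w := by
  rw [cinner]; simp [cnmax, cC_mkC, cMin_mkC, cMax_mkC]

lemma inner_cneq (w : CConf d n) : ⟪cneq d n, w⟫ = (Real.sqrt 2)⁻¹ * (cMax w - cMin w) := by
  rw [cinner]; simp [cneq, cC_mkC, cMin_mkC, cMax_mkC]; ring

lemma sqrt3_pos : (0:ℝ) < Real.sqrt 3 := Real.sqrt_pos.2 (by norm_num)
lemma sq_sqrt3 : Real.sqrt 3 ^ 2 = 3 := Real.sq_sqrt (by norm_num)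
lemma sq_sqrt2 : Real.sqrt 2 ^ 2 = 2 := Real.sq_sqrt (by norm_num)
lemma sqrt2_pos : (0:ℝ) < Real.sqrt 2 := Real.sqrt_pos.2 (by norm_num)

lemma bv_cnm (x : CConf d n) (i : Fin n) (h : (i : ℕ) + 1 < n) :
    bv (cnm x i h) i = (2 * (cMin x * Real.sqrt 3)⁻¹) • bv x i := by
  rw [bv_of_lt _ i h, cnm, cC_mkC, cC_mkC, if_pos rfl, if_neg (Ne.symm (ne_succ i h)), if_pos rfl,
    bv_of_lt x i h]
  module

lemma bv_cnp (x : CConf d n) (i : Fin n) (h : (i : ℕ) + 1 < n) :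
    bv (cnp x i h) i = (-(2 * (cMax x * Real.sqrt 3)⁻¹)) • bv x i := by
  rw [bv_of_lt _ i h, cnp, cC_mkC, cC_mkC, if_pos rfl, if_neg (Ne.symm (ne_succ i h)), if_pos rfl,
    bv_of_lt x i h]
  module


/-- `cnm` is a unit vector at configurations where its constraint is active. -/
lemma norm_cnm (x : CConf d n) (i : Fin n) (h : (i : ℕ) + 1 < n)
    (hact : ‖bv x i‖ = cMin x) (hpos : 0 < cMin x) : ‖cnm x i h‖ = 1 := by
  have h2 : ‖cnm x i h‖ ^ 2 = 1 := by
    rw [← real_inner_self_eq_norm_sq, inner_cnm, bv_cnm, real_inner_smul_right,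
      real_inner_self_eq_norm_sq, hact, cMin_cnm]
    have h3 := sq_sqrt3
    have hs := sqrt3_pos
    field_simp
    nlinarith [hpos, hs]
  nlinarith [norm_nonneg (cnm x i h), h2]

lemma norm_cnp (x : CConf d n) (i : Fin n) (h : (i : ℕ) + 1 < n)
    (hact : ‖bv x i‖ = cMax x) (hpos : 0 < cMax x) : ‖cnp x i h‖ = 1 := by
  have h2 : ‖cnp x i h‖ ^ 2 = 1 := by
    rw [← real_inner_self_eq_norm_sq, inner_cnp, bv_cnp, real_inner_smul_right,
      real_inner_self_eq_norm_sq, hact, cMax_cnp]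
    have h3 := sq_sqrt3
    have hs := sqrt3_pos
    field_simp
    nlinarith [hpos, hs]
  nlinarith [norm_nonneg (cnp x i h), h2]

lemma norm_cnmin : ‖cnmin d n‖ = 1 := by
  have h2 : ‖cnmin d n‖ ^ 2 = 1 := by
    rw [← real_inner_self_eq_norm_sq, inner_cnmin]
    rfl
  nlinarith [norm_nonneg (cnmin d n), h2]

lemma norm_cnmax : ‖cnmax d n‖ = 1 := by
  have h2 : ‖cnmax d n‖ ^ 2 = 1 := by
    rw [← real_inner_self_eq_norm_sq, inner_cnmax, show cMax (cnmax d n) = -1 from rfl]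
    norm_num
  nlinarith [norm_nonneg (cnmax d n), h2]

lemma norm_cneq : ‖cneq d n‖ = 1 := by
  have h2 : ‖cneq d n‖ ^ 2 = 1 := by
    rw [← real_inner_self_eq_norm_sq, inner_cneq]
    have h3 := sq_sqrt2
    have hs := sqrt2_pos
    rw [show cMax (cneq d n) = (Real.sqrt 2)⁻¹ from rfl, show cMin (cneq d n) = -(Real.sqrt 2)⁻¹ from rfl]
    field_simp; rw [h3]; norm_num
  nlinarith [norm_nonneg (cneq d n), h2]

/-- Membership in `Ac` in terms of bond vectors. -/
lemma mem_Ac_iff {rm rp : ℝ} {x : CConf d n} :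
    x ∈ Ac d n rm rp ↔ rm ≤ cMin x ∧ cMin x ≤ cMax x ∧ cMax x ≤ rp ∧
      ∀ i : Fin n, (i : ℕ) + 1 < n → (cMin x ≤ ‖bv x i‖ ∧ ‖bv x i‖ ≤ cMax x) := by
  constructor
  · rintro ⟨h1, h2, h3, h4⟩
    exact ⟨h1, h2, h3, fun i h => by rw [bv_of_lt x i h]; exact h4 i h⟩
  · rintro ⟨h1, h2, h3, h4⟩
    exact ⟨h1, h2, h3, fun i h => by rw [← bv_of_lt x i h]; exact h4 i h⟩

/-- Criterion for the exterior ball condition. -/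
lemma ball_inter_empty_iff {D : Set (CConf d n)} {x v : CConf d n} {α : ℝ}
    (hv : ‖v‖ = 1) (hα : 0 < α) :
    Metric.ball (x - α • v) α ∩ D = ∅ ↔ ∀ y ∈ D, 2 * α * ⟪v, x - y⟫ ≤ ‖x - y‖ ^ 2 := by
  rw [Set.eq_empty_iff_forall_notMem]
  constructor
  · intro H y hy
    have hb : α ≤ ‖y - (x - α • v)‖ := by
      by_contra hc
      push_neg at hc
      exact H y ⟨Metric.mem_ball.2 (by rwa [dist_eq_norm]), hy⟩
    have hexp : ‖y - (x - α • v)‖ ^ 2 = ‖y - x‖ ^ 2 + 2 * α * ⟪v, y - x⟫ + α ^ 2 := by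
      have : y - (x - α • v) = (y - x) + α • v := by abel
      rw [this, norm_add_sq_real, real_inner_smul_right, norm_smul, real_inner_comm]
      rw [Real.norm_eq_abs, abs_of_pos hα, hv]
      ring
    have h2 : α ^ 2 ≤ ‖y - (x - α • v)‖ ^ 2 := by nlinarith [hb, norm_nonneg (y - (x - α • v))]
    rw [hexp] at h2
    have : ⟪v, x - y⟫ = -⟪v, y - x⟫ := by rw [← inner_neg_right]; congr 1; abel
    rw [this, ← neg_sub y x, norm_neg]
    nlinarith
  · intro H y ⟨hmem, hy⟩
    have h1 := H y hy
    rw [Metric.mem_ball, dist_eq_norm] at hmem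
    have hexp : ‖y - (x - α • v)‖ ^ 2 = ‖y - x‖ ^ 2 + 2 * α * ⟪v, y - x⟫ + α ^ 2 := by
      have : y - (x - α • v) = (y - x) + α • v := by abel
      rw [this, norm_add_sq_real, real_inner_smul_right, norm_smul, real_inner_comm]
      rw [Real.norm_eq_abs, abs_of_pos hα, hv]
      ring
    have hlt : ‖y - (x - α • v)‖ ^ 2 < α ^ 2 := by
      nlinarith [norm_nonneg (y - (x - α • v)), hmem]
    rw [hexp] at hlt
    have hxy : ⟪v, x - y⟫ = -⟪v, y - x⟫ := by rw [← inner_neg_right]; congr 1; abel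
    rw [hxy, ← neg_sub y x, norm_neg] at h1
    nlinarith

end
end S15
namespace S15
noncomputable section
variable {d n : ℕ}

lemma continuous_cMin : Continuous (cMin : CConf d n → ℝ) := by
  refine (LipschitzWith.of_dist_le_mul (K := 1) fun x y => ?_).continuous
  rw [Real.dist_eq, dist_eq_norm, ← cMin_sub]
  simpa using abs_cMin_le_norm (x - y)

lemma continuous_cMax : Continuous (cMax : CConf d n → ℝ) := by
  refine (LipschitzWith.of_dist_le_mul (K := 1) fun x y => ?_).continuous
  rw [Real.dist_eq, dist_eq_norm, ← cMax_sub]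
  simpa using abs_cMax_le_norm (x - y)

lemma continuous_bl (i : Fin n) : Continuous (fun x : CConf d n => ‖bv x i‖) := by
  refine Continuous.norm ?_
  refine (LipschitzWith.of_dist_le_mul (K := 2) fun x y => ?_).continuous
  rw [dist_eq_norm, dist_eq_norm, ← bv_sub]
  simpa using norm_bv_le (x - y) i

lemma isClosed_Ac (rm rp : ℝ) : IsClosed (Ac d n rm rp) := by
  have he : Ac d n rm rp = {x : CConf d n | rm ≤ cMin x} ∩ {x | cMin x ≤ cMax x} ∩
      {x | cMax x ≤ rp} ∩
      ⋂ (i : Fin n), {x | (i:ℕ)+1 < n → (cMin x ≤ ‖bv x i‖ ∧ ‖bv x i‖ ≤ cMax x)} := by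
    ext x
    simp only [mem_Ac_iff, Set.mem_inter_iff, Set.mem_setOf_eq, Set.mem_iInter]
    tauto
  rw [he]
  refine (((isClosed_le continuous_const continuous_cMin).inter
    (isClosed_le continuous_cMin continuous_cMax)).inter
    (isClosed_le continuous_cMax continuous_const)).inter
    (isClosed_iInter fun i => ?_)
  by_cases hp : (i:ℕ)+1 < n
  · have : {x : CConf d n | (i:ℕ)+1 < n → (cMin x ≤ ‖bv x i‖ ∧ ‖bv x i‖ ≤ cMax x)} =
        {x | cMin x ≤ ‖bv x i‖} ∩ {x | ‖bv x i‖ ≤ cMax x} := by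
      ext x; simp only [Set.mem_setOf_eq, Set.mem_inter_iff]; tauto
    rw [this]
    exact (isClosed_le continuous_cMin (continuous_bl i)).inter
      (isClosed_le (continuous_bl i) continuous_cMax)
  · have : {x : CConf d n | (i:ℕ)+1 < n → (cMin x ≤ ‖bv x i‖ ∧ ‖bv x i‖ ≤ cMax x)} =
        Set.univ := by
      ext x; simp [hp]
    rw [this]; exact isClosed_univ

/-- Every frontier point of `Ac` lies in `C` and has at least one active constraint. -/
lemma frontier_active {rm rp : ℝ} {x : CConf d n} (hx : x ∈ frontier (Ac d n rm rp)) :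
    x ∈ Ac d n rm rp ∧ (cMin x = rm ∨ cMax x = rp ∨ cMin x = cMax x ∨
      ∃ i : Fin n, ∃ _ : (i:ℕ)+1 < n, (‖bv x i‖ = cMin x ∨ ‖bv x i‖ = cMax x)) := by
  have hxc : x ∈ Ac d n rm rp := by
    have := hx.1
    rwa [(isClosed_Ac rm rp).closure_eq] at this
  refine ⟨hxc, ?_⟩
  by_contra hc
  push_neg at hc
  obtain ⟨h1, h2, h3, h4⟩ := hc
  obtain ⟨g1, g2, g3, g4⟩ := mem_Ac_iff.1 hxc
  -- x lies in the open set of strictly feasible configurations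
  set U : Set (CConf d n) := {y : CConf d n | rm < cMin y} ∩ {y | cMin y < cMax y} ∩
      {y | cMax y < rp} ∩
      ⋂ (i : Fin n), {y | (i:ℕ)+1 < n → (cMin y < ‖bv y i‖ ∧ ‖bv y i‖ < cMax y)} with hU
  have hUopen : IsOpen U := by
    refine (((isOpen_lt continuous_const continuous_cMin).inter
      (isOpen_lt continuous_cMin continuous_cMax)).inter
      (isOpen_lt continuous_cMax continuous_const)).inter
      (isOpen_iInter_of_finite fun i => ?_)
    by_cases hp : (i:ℕ)+1 < n
    · have : {y : CConf d n | (i:ℕ)+1 < n → (cMin y < ‖bv y i‖ ∧ ‖bv y i‖ < cMax y)} =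
          {y | cMin y < ‖bv y i‖} ∩ {y | ‖bv y i‖ < cMax y} := by
        ext y; simp only [Set.mem_setOf_eq, Set.mem_inter_iff]; tauto
      rw [this]
      exact (isOpen_lt continuous_cMin (continuous_bl i)).inter
        (isOpen_lt (continuous_bl i) continuous_cMax)
    · have : {y : CConf d n | (i:ℕ)+1 < n → (cMin y < ‖bv y i‖ ∧ ‖bv y i‖ < cMax y)} =
          Set.univ := by ext y; simp [hp]
      rw [this]; exact isOpen_univ
  have hUsub : U ⊆ Ac d n rm rp := by
    intro y hy
    obtain ⟨⟨⟨k1, k2⟩, k3⟩, k4⟩ := hy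
    rw [Set.mem_iInter] at k4
    exact mem_Ac_iff.2 ⟨le_of_lt k1, le_of_lt k2, le_of_lt k3,
      fun i hi => ⟨le_of_lt ((k4 i) hi).1, le_of_lt ((k4 i) hi).2⟩⟩
  have hxU : x ∈ U := by
    refine ⟨⟨⟨lt_of_le_of_ne g1 (Ne.symm h1), lt_of_le_of_ne g2 h3⟩,
      lt_of_le_of_ne g3 h2⟩, ?_⟩
    rw [Set.mem_iInter]
    intro i hi
    exact ⟨lt_of_le_of_ne (g4 i hi).1 (fun he => (h4 i hi).1 he.symm),
      lt_of_le_of_ne (g4 i hi).2 (h4 i hi).2⟩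
  exact hx.2 (interior_maximal hUsub hUopen hxU)

end
end S15
namespace S15
noncomputable section
variable {d n : ℕ}

lemma sqrt3_ne : (Real.sqrt 3) ≠ 0 := ne_of_gt sqrt3_pos

/-- Exterior estimate for an active lower bond normal. -/
lemma est_cnm {rm rp : ℝ} {x y : CConf d n} (hx : x ∈ Ac d n rm rp) (hy : y ∈ Ac d n rm rp)
    (h0 : 0 < rm) (i : Fin n) (h : (i:ℕ)+1 < n) (hact : ‖bv x i‖ = cMin x) :
    ⟪cnm x i h, x - y⟫ ≤ ‖bv x i - bv y i‖ ^ 2 / (Real.sqrt 3 * (2 * cMin x)) := by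
  obtain ⟨hx1, hx2, hx3, hx4⟩ := mem_Ac_iff.1 hx
  obtain ⟨hy1, hy2, hy3, hy4⟩ := mem_Ac_iff.1 hy
  have ha : 0 < cMin x := lt_of_lt_of_le h0 hx1
  set a := cMin x with hadef
  set B := bv x i with hB
  set C := bv y i with hC
  have hBC : ‖B - C‖ ^ 2 = ‖B‖ ^ 2 - 2 * ⟪B, C⟫ + ‖C‖ ^ 2 := by
    rw [norm_sub_sq_real]
  have hCy : cMin y ≤ ‖C‖ := (hy4 i h).1
  have hkey : 2 * ⟪B, B - C⟫ - 2 * a * (cMin x - cMin y) ≤ ‖B - C‖ ^ 2 := by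
    rw [inner_sub_right, real_inner_self_eq_norm_sq, hact]
    rw [hBC, hact]
    nlinarith [sq_nonneg (a - ‖C‖), hCy, ha]
  rw [inner_cnm, bv_sub, cMin_sub, ← hadef, ← hB, ← hC]
  calc (a * Real.sqrt 3)⁻¹ * ⟪B, B - C⟫ - (Real.sqrt 3)⁻¹ * (cMin x - cMin y)
      = (Real.sqrt 3 * (2 * a))⁻¹ * (2 * ⟪B, B - C⟫ - 2 * a * (cMin x - cMin y)) := by
        field_simp
    _ ≤ (Real.sqrt 3 * (2 * a))⁻¹ * ‖B - C‖ ^ 2 :=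
        mul_le_mul_of_nonneg_left hkey (by positivity)
    _ = ‖B - C‖ ^ 2 / (Real.sqrt 3 * (2 * a)) := by ring

/-- Exterior estimate for an active upper bond normal. -/
lemma est_cnp {rm rp : ℝ} {x y : CConf d n} (hx : x ∈ Ac d n rm rp) (hy : y ∈ Ac d n rm rp)
    (h0 : 0 < rm) (i : Fin n) (h : (i:ℕ)+1 < n) (hact : ‖bv x i‖ = cMax x) :
    ⟪cnp x i h, x - y⟫ ≤ 0 := by
  obtain ⟨hx1, hx2, hx3, hx4⟩ := mem_Ac_iff.1 hx
  obtain ⟨hy1, hy2, hy3, hy4⟩ := mem_Ac_iff.1 hy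
  have hb : 0 < cMax x := lt_of_lt_of_le h0 (le_trans hx1 hx2)
  set b := cMax x with hbdef
  set B := bv x i with hB
  set C := bv y i with hC
  have h1 : ⟪B, C⟫ ≤ b * cMax y := by
    calc ⟪B, C⟫ ≤ ‖B‖ * ‖C‖ := real_inner_le_norm B C
    _ ≤ b * cMax y := by
        have := (hy4 i h).2
        have hc0 : (0:ℝ) ≤ ‖C‖ := norm_nonneg _
        rw [hact]
        exact mul_le_mul le_rfl this hc0 (le_of_lt hb)
  rw [inner_cnp, bv_sub, cMax_sub, ← hbdef, ← hB, ← hC]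
  have heq : -((b * Real.sqrt 3)⁻¹ * ⟪B, B - C⟫) + (Real.sqrt 3)⁻¹ * (cMax x - cMax y)
      = (b * Real.sqrt 3)⁻¹ * (⟪B, C⟫ - b * cMax y) := by
    rw [inner_sub_right, real_inner_self_eq_norm_sq, hact]
    field_simp
    ring
  rw [heq]
  exact mul_nonpos_of_nonneg_of_nonpos (by positivity) (by linarith)

lemma est_cnmin {rm rp : ℝ} {x y : CConf d n} (hy : y ∈ Ac d n rm rp)
    (hact : cMin x = rm) : ⟪cnmin d n, x - y⟫ ≤ 0 := by
  rw [inner_cnmin, cMin_sub, hact]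
  linarith [(mem_Ac_iff.1 hy).1]

lemma est_cnmax {rm rp : ℝ} {x y : CConf d n} (hy : y ∈ Ac d n rm rp)
    (hact : cMax x = rp) : ⟪cnmax d n, x - y⟫ ≤ 0 := by
  rw [inner_cnmax, cMax_sub, hact]
  obtain ⟨h1, h2, h3, _⟩ := mem_Ac_iff.1 hy
  linarith

lemma est_cneq {rm rp : ℝ} {x y : CConf d n} (hy : y ∈ Ac d n rm rp)
    (hact : cMin x = cMax x) : ⟪cneq d n, x - y⟫ ≤ 0 := by
  rw [inner_cneq, cMax_sub, cMin_sub]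
  obtain ⟨h1, h2, h3, _⟩ := mem_Ac_iff.1 hy
  have : cMax (x:CConf d n) - cMax y - (cMin x - cMin y) ≤ 0 := by rw [← hact]; linarith
  exact mul_nonpos_of_nonneg_of_nonpos (by positivity) (by linarith)

/-- The squared bond difference is controlled by the squared configuration distance
(single bond). -/
lemma bv_sq_le (z : CConf d n) (i : Fin n) : ‖bv z i‖ ^ 2 ≤ 2 * ‖z‖ ^ 2 := by
  unfold bv
  split_ifs with h
  · have h1 : ‖cC z i - cC z ⟨(i:ℕ)+1, h⟩‖ ^ 2 ≤
        2 * (‖cC z i‖ ^ 2 + ‖cC z ⟨(i:ℕ)+1, h⟩‖ ^ 2) := by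
      have heq := norm_sub_sq_real (cC z i) (cC z ⟨(i:ℕ)+1, h⟩)
      have habs := abs_real_inner_le_norm (cC z i) (cC z ⟨(i:ℕ)+1, h⟩)
      have hlow := neg_le_of_abs_le habs
      nlinarith [sq_nonneg (‖cC z i‖ - ‖cC z ⟨(i:ℕ)+1, h⟩‖)]
    have h2 : ‖cC z i‖ ^ 2 + ‖cC z ⟨(i:ℕ)+1, h⟩‖ ^ 2 ≤ ‖z‖ ^ 2 := by
      have h3 : ∑ k ∈ ({i, ⟨(i:ℕ)+1, h⟩} : Finset (Fin n)), ‖cC z k‖ ^ 2 ≤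
          ∑ k, ‖cC z k‖ ^ 2 :=
        Finset.sum_le_sum_of_subset_of_nonneg (Finset.subset_univ _)
          (fun k _ _ => sq_nonneg _)
      rw [Finset.sum_pair (ne_succ i h)] at h3
      have := cnormsq z
      nlinarith [sq_nonneg (cMin z), sq_nonneg (cMax z)]
    nlinarith
  · simp

end
end S15
namespace S15
noncomputable section
variable {d n : ℕ}

lemma norm_sub_sq_le_two {E : Type*} [NormedAddCommGroup E] [InnerProductSpace ℝ E]
    (A B : E) : ‖A - B‖ ^ 2 ≤ 2 * ‖A‖ ^ 2 + 2 * ‖B‖ ^ 2 := by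
  have heq := norm_sub_sq_real A B
  have habs := abs_real_inner_le_norm A B
  have hlow := neg_le_of_abs_le habs
  nlinarith [sq_nonneg (‖A‖ - ‖B‖)]

/-- Total bond-difference estimate. -/
lemma sum_bv_sq_le (z : CConf d n) : ∑ i : Fin n, ‖bv z i‖ ^ 2 ≤ 4 * ‖z‖ ^ 2 := by
  set c : ℕ → ℝ := fun j => if hj : j < n then ‖cC z ⟨j, hj⟩‖ ^ 2 else 0 with hc
  have hc0 : ∀ j, 0 ≤ c j := by
    intro j; rw [hc]; dsimp only; split_ifs; exacts [sq_nonneg _, le_rfl]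
  set F : ℕ → ℝ := fun j => if hj : j < n then ‖bv z ⟨j, hj⟩‖ ^ 2 else 0 with hF
  have h1 : ∑ i : Fin n, ‖bv z i‖ ^ 2 = ∑ j ∈ Finset.range n, F j := by
    rw [← Fin.sum_univ_eq_sum_range]
    refine Finset.sum_congr rfl fun i _ => ?_
    rw [hF]; dsimp only; rw [dif_pos i.isLt]
  have h2 : ∀ j ∈ Finset.range n, F j ≤ 2 * c j + 2 * c (j + 1) := by
    intro j hj
    rw [Finset.mem_range] at hj
    have hFj : F j = ‖bv z ⟨j, hj⟩‖ ^ 2 := dif_pos hj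
    rw [hFj]
    by_cases hj1 : j + 1 < n
    · have hcj : c j = ‖cC z ⟨j, hj⟩‖ ^ 2 := dif_pos hj
      have hcj1 : c (j+1) = ‖cC z ⟨j+1, hj1⟩‖ ^ 2 := dif_pos hj1
      rw [hcj, hcj1, bv_of_lt z ⟨j, hj⟩ hj1]
      exact norm_sub_sq_le_two _ _
    · rw [show bv z ⟨j, hj⟩ = 0 from dif_neg hj1, norm_zero]
      have := hc0 j
      have := hc0 (j+1)
      nlinarith
  have h3 : ∑ j ∈ Finset.range n, c j ≤ ‖z‖ ^ 2 := by
    have : ∑ j ∈ Finset.range n, c j = ∑ i : Fin n, ‖cC z i‖ ^ 2 := by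
      rw [← Fin.sum_univ_eq_sum_range]
      refine Finset.sum_congr rfl fun i _ => ?_
      rw [hc]; dsimp only; rw [dif_pos i.isLt]
    rw [this]
    have := cnormsq z
    nlinarith [sq_nonneg (cMin z), sq_nonneg (cMax z)]
  have h4 : ∑ j ∈ Finset.range n, c (j + 1) ≤ ‖z‖ ^ 2 := by
    have e1 : ∑ j ∈ Finset.range (n+1), c j = (∑ j ∈ Finset.range n, c (j+1)) + c 0 :=
      Finset.sum_range_succ' c n
    have e2 : ∑ j ∈ Finset.range (n+1), c j = (∑ j ∈ Finset.range n, c j) + c n :=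
      Finset.sum_range_succ c n
    have e3 : c n = 0 := by rw [hc]; dsimp only; rw [dif_neg (lt_irrefl n)]
    have := hc0 0
    linarith
  calc ∑ i : Fin n, ‖bv z i‖ ^ 2 = ∑ j ∈ Finset.range n, F j := h1
    _ ≤ ∑ j ∈ Finset.range n, (2 * c j + 2 * c (j+1)) := Finset.sum_le_sum h2
    _ = 2 * (∑ j ∈ Finset.range n, c j) + 2 * (∑ j ∈ Finset.range n, c (j+1)) := by
        rw [Finset.sum_add_distrib, Finset.mul_sum, Finset.mul_sum]
    _ ≤ 4 * ‖z‖ ^ 2 := by linarith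

/-- Unit bond direction. -/
def ub (x : CConf d n) (i : Fin n) : EuclideanSpace ℝ (Fin d) := ‖bv x i‖⁻¹ • bv x i

lemma norm_ub_le (x : CConf d n) (i : Fin n) : ‖ub x i‖ ≤ 1 := by
  unfold ub
  rcases eq_or_ne (bv x i) 0 with h | h
  · simp [h]
  · rw [norm_smul, Real.norm_eq_abs, abs_of_nonneg (inv_nonneg.2 (norm_nonneg _)),
      inv_mul_cancel₀ (norm_ne_zero_iff.2 h)]

lemma inner_bv_ub (x : CConf d n) (i : Fin n) : ⟪bv x i, ub x i⟫ = ‖bv x i‖ := by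
  unfold ub
  rcases eq_or_ne (bv x i) 0 with h | h
  · simp [h]
  · rw [real_inner_smul_right, real_inner_self_eq_norm_sq]
    field_simp [norm_ne_zero_iff.2 h]

/-- General witness configuration built from bond stretching factors `c` and slopes. -/
def wit (x : CConf d n) (c : Fin n → ℝ) (da db : ℝ) : CConf d n :=
  mkC (fun k => -∑ j ∈ Finset.univ.filter (fun j : Fin n => (j:ℕ) < (k:ℕ)), c j • ub x j) da db

lemma cMin_wit (x : CConf d n) (c : Fin n → ℝ) (da db : ℝ) : cMin (wit x c da db) = da := rfl
lemma cMax_wit (x : CConf d n) (c : Fin n → ℝ) (da db : ℝ) : cMax (wit x c da db) = db := rfl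

lemma bv_wit (x : CConf d n) (c : Fin n → ℝ) (da db : ℝ) (k : Fin n) (hk : (k:ℕ)+1 < n) :
    bv (wit x c da db) k = c k • ub x k := by
  rw [bv_of_lt _ k hk]
  have e1 : cC (wit x c da db) k
      = -∑ j ∈ Finset.univ.filter (fun j : Fin n => (j:ℕ) < (k:ℕ)), c j • ub x j := rfl
  have e2 : cC (wit x c da db) ⟨(k:ℕ)+1, hk⟩
      = -∑ j ∈ Finset.univ.filter (fun j : Fin n => (j:ℕ) < (k:ℕ)+1), c j • ub x j := rfl
  rw [e1, e2]
  have hfe : (Finset.univ.filter (fun j : Fin n => (j:ℕ) < (k:ℕ)+1))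
      = insert k (Finset.univ.filter (fun j : Fin n => (j:ℕ) < (k:ℕ))) := by
    ext j
    simp only [Finset.mem_filter, Finset.mem_insert, Finset.mem_univ, true_and]
    constructor
    · intro hj
      rcases eq_or_ne (j:ℕ) (k:ℕ) with hw | hw
      · exact Or.inl (Fin.ext hw)
      · exact Or.inr (by omega)
    · rintro (hj | hj)
      · subst hj; omega
      · omega
  rw [hfe, Finset.sum_insert (by simp)]
  abel

lemma norm_wit_sq_le (x : CConf d n) (c : Fin n → ℝ) (da db : ℝ) :
    ‖wit x c da db‖ ^ 2 ≤ n * (∑ j, |c j|) ^ 2 + da ^ 2 + db ^ 2 := by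
  rw [cnormsq, cMin_wit, cMax_wit]
  have hk : ∀ k : Fin n, ‖cC (wit x c da db) k‖ ≤ ∑ j, |c j| := by
    intro k
    have e1 : cC (wit x c da db) k
        = -∑ j ∈ Finset.univ.filter (fun j : Fin n => (j:ℕ) < (k:ℕ)), c j • ub x j := rfl
    rw [e1, norm_neg]
    calc ‖∑ j ∈ Finset.univ.filter (fun j : Fin n => (j:ℕ) < (k:ℕ)), c j • ub x j‖
        ≤ ∑ j ∈ Finset.univ.filter (fun j : Fin n => (j:ℕ) < (k:ℕ)), ‖c j • ub x j‖ :=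
          norm_sum_le _ _
      _ ≤ ∑ j ∈ Finset.univ.filter (fun j : Fin n => (j:ℕ) < (k:ℕ)), |c j| := by
          refine Finset.sum_le_sum fun j _ => ?_
          rw [norm_smul, Real.norm_eq_abs]
          calc |c j| * ‖ub x j‖ ≤ |c j| * 1 :=
            mul_le_mul_of_nonneg_left (norm_ub_le x j) (abs_nonneg _)
          _ = |c j| := mul_one _
      _ ≤ ∑ j, |c j| :=
          Finset.sum_le_sum_of_subset_of_nonneg (Finset.subset_univ _)
            (fun j _ _ => abs_nonneg _)
  have hsum : ∑ k : Fin n, ‖cC (wit x c da db) k‖ ^ 2 ≤ n * (∑ j, |c j|) ^ 2 := by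
    have hb : ∀ k : Fin n, ‖cC (wit x c da db) k‖ ^ 2 ≤ (∑ j, |c j|) ^ 2 := by
      intro k
      have h1 := hk k
      have h2 : (0:ℝ) ≤ ‖cC (wit x c da db) k‖ := norm_nonneg _
      nlinarith
    calc ∑ k : Fin n, ‖cC (wit x c da db) k‖ ^ 2 ≤ ∑ _k : Fin n, (∑ j, |c j|) ^ 2 :=
        Finset.sum_le_sum fun k _ => hb k
      _ = n * (∑ j, |c j|) ^ 2 := by
        rw [Finset.sum_const, Finset.card_univ, Fintype.card_fin, nsmul_eq_mul]
  linarith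

lemma inner_cnm_wit (x : CConf d n) (i : Fin n) (h : (i:ℕ)+1 < n) (c : Fin n → ℝ)
    (da db : ℝ) : ⟪cnm x i h, wit x c da db⟫
      = (cMin x * Real.sqrt 3)⁻¹ * (c i * ‖bv x i‖) - (Real.sqrt 3)⁻¹ * da := by
  rw [inner_cnm, bv_wit x c da db i h, cMin_wit, real_inner_smul_right, inner_bv_ub]

lemma inner_cnp_wit (x : CConf d n) (i : Fin n) (h : (i:ℕ)+1 < n) (c : Fin n → ℝ)
    (da db : ℝ) : ⟪cnp x i h, wit x c da db⟫
      = -((cMax x * Real.sqrt 3)⁻¹ * (c i * ‖bv x i‖)) + (Real.sqrt 3)⁻¹ * db := by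
  rw [inner_cnp, bv_wit x c da db i h, cMax_wit, real_inner_smul_right, inner_bv_ub]

end
end S15
namespace S15
noncomputable section
variable {d n : ℕ}

def cnm' (x : CConf d n) (i : Fin n) : CConf d n :=
  if h : (i:ℕ)+1 < n then cnm x i h else 0

def cnp' (x : CConf d n) (i : Fin n) : CConf d n :=
  if h : (i:ℕ)+1 < n then cnp x i h else 0

/-- The cone generated by the active constraint normals at `x`. -/
def Kone (rm rp : ℝ) (x : CConf d n) : Set (CConf d n) :=
  {u | ∃ lm lp : Fin n → ℝ, ∃ la lb le : ℝ,
    (∀ i, 0 ≤ lm i) ∧ (∀ i, 0 ≤ lp i) ∧ 0 ≤ la ∧ 0 ≤ lb ∧ 0 ≤ le ∧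
    (∀ i, lm i ≠ 0 → ((i:ℕ)+1 < n ∧ ‖bv x i‖ = cMin x)) ∧
    (∀ i, lp i ≠ 0 → ((i:ℕ)+1 < n ∧ ‖bv x i‖ = cMax x)) ∧
    (la ≠ 0 → cMin x = rm) ∧ (lb ≠ 0 → cMax x = rp) ∧ (le ≠ 0 → cMin x = cMax x) ∧
    u = (∑ i, lm i • cnm' x i) + (∑ i, lp i • cnp' x i)
      + la • cnmin d n + lb • cnmax d n + le • cneq d n}

lemma inner_decomp {x u : CConf d n} {lm lp : Fin n → ℝ} {la lb le : ℝ}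
    (hu : u = (∑ i, lm i • cnm' x i) + (∑ i, lp i • cnp' x i)
      + la • cnmin d n + lb • cnmax d n + le • cneq d n) (w : CConf d n) :
    ⟪u, w⟫ = (∑ i, lm i * ⟪cnm' x i, w⟫) + (∑ i, lp i * ⟪cnp' x i, w⟫)
      + la * ⟪cnmin d n, w⟫ + lb * ⟪cnmax d n, w⟫ + le * ⟪cneq d n, w⟫ := by
  subst hu
  simp only [inner_add_left, sum_inner, real_inner_smul_left]

lemma cMin_pos {rm rp : ℝ} {x : CConf d n} (h0 : 0 < rm) (hx : x ∈ Ac d n rm rp) :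
    0 < cMin x := lt_of_lt_of_le h0 (mem_Ac_iff.1 hx).1

lemma cMax_pos {rm rp : ℝ} {x : CConf d n} (h0 : 0 < rm) (hx : x ∈ Ac d n rm rp) :
    0 < cMax x := lt_of_lt_of_le (cMin_pos h0 hx) (mem_Ac_iff.1 hx).2.1

/-- Pairing of a cone element with a witness configuration. -/
lemma inner_decomp_wit {rm rp : ℝ} {x u : CConf d n} (h0 : 0 < rm)
    (hx : x ∈ Ac d n rm rp) {lm lp : Fin n → ℝ} {la lb le : ℝ}
    (hsm : ∀ i, lm i ≠ 0 → ((i:ℕ)+1 < n ∧ ‖bv x i‖ = cMin x))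
    (hsp : ∀ i, lp i ≠ 0 → ((i:ℕ)+1 < n ∧ ‖bv x i‖ = cMax x))
    (hu : u = (∑ i, lm i • cnm' x i) + (∑ i, lp i • cnp' x i)
      + la • cnmin d n + lb • cnmax d n + le • cneq d n)
    (c : Fin n → ℝ) (da db : ℝ) :
    ⟪u, wit x c da db⟫ = (∑ k, lm k * ((Real.sqrt 3)⁻¹ * (c k - da)))
      + (∑ k, lp k * ((Real.sqrt 3)⁻¹ * (db - c k)))
      + la * da + lb * (-db) + le * ((Real.sqrt 2)⁻¹ * (db - da)) := by
  rw [inner_decomp hu, inner_cnmin, inner_cnmax, inner_cneq, cMin_wit, cMax_wit]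
  have e1 : ∀ k : Fin n, lm k * ⟪cnm' x k, wit x c da db⟫
      = lm k * ((Real.sqrt 3)⁻¹ * (c k - da)) := by
    intro k
    rcases eq_or_ne (lm k) 0 with hk | hk
    · rw [hk, zero_mul, zero_mul]
    · obtain ⟨hkv, hka⟩ := hsm k hk
      have ha := ne_of_gt (cMin_pos h0 hx)
      have : ⟪cnm' x k, wit x c da db⟫ = (Real.sqrt 3)⁻¹ * (c k - da) := by
        rw [cnm', dif_pos hkv, inner_cnm_wit, hka]
        field_simp
      rw [this]
  have e2 : ∀ k : Fin n, lp k * ⟪cnp' x k, wit x c da db⟫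
      = lp k * ((Real.sqrt 3)⁻¹ * (db - c k)) := by
    intro k
    rcases eq_or_ne (lp k) 0 with hk | hk
    · rw [hk, zero_mul, zero_mul]
    · obtain ⟨hkv, hka⟩ := hsp k hk
      have hb := ne_of_gt (cMax_pos h0 hx)
      have : ⟪cnp' x k, wit x c da db⟫ = (Real.sqrt 3)⁻¹ * (db - c k) := by
        rw [cnp', dif_pos hkv, inner_cnp_wit, hka]
        field_simp
        ring
      rw [this]
  rw [Finset.sum_congr rfl fun k _ => e1 k, Finset.sum_congr rfl fun k _ => e2 k]

/-- Core argument of the coefficient bound, for a generic witness. -/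
lemma coef_core {rm rp : ℝ} {x u : CConf d n} (h0 : 0 < rm)
    (hx : x ∈ Ac d n rm rp) {lm lp : Fin n → ℝ} {la lb le : ℝ}
    (hm0 : ∀ i, 0 ≤ lm i) (hp0 : ∀ i, 0 ≤ lp i) (ha0 : 0 ≤ la) (hb0 : 0 ≤ lb) (he0 : 0 ≤ le)
    (hsm : ∀ i, lm i ≠ 0 → ((i:ℕ)+1 < n ∧ ‖bv x i‖ = cMin x))
    (hsp : ∀ i, lp i ≠ 0 → ((i:ℕ)+1 < n ∧ ‖bv x i‖ = cMax x))
    (hu : u = (∑ i, lm i • cnm' x i) + (∑ i, lp i • cnp' x i)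
      + la • cnmin d n + lb • cnmax d n + le • cneq d n)
    (i : Fin n) (c : Fin n → ℝ) (da db : ℝ)
    (W1 : ∀ k, lm k ≠ 0 → da ≤ c k)
    (W2 : ∀ k, lp k ≠ 0 → c k ≤ db)
    (W3 : la ≠ 0 → 0 ≤ da)
    (W4 : lb ≠ 0 → db ≤ 0)
    (W5 : le ≠ 0 → da ≤ db)
    (W6 : 1 + da ≤ c i)
    (W7 : ‖wit x c da db‖ ^ 2 ≤ n + 1) :
    lm i ≤ Real.sqrt 3 * Real.sqrt (n+1) * ‖u‖ := by
  have hs3 := sqrt3_pos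
  have hs2 := sqrt2_pos
  have hup : ⟪u, wit x c da db⟫ ≤ ‖u‖ * Real.sqrt (n+1) := by
    calc ⟪u, wit x c da db⟫ ≤ ‖u‖ * ‖wit x c da db‖ := real_inner_le_norm _ _
    _ ≤ ‖u‖ * Real.sqrt (n+1) := by
        refine mul_le_mul_of_nonneg_left ?_ (norm_nonneg u)
        have h1 : ‖wit x c da db‖ ≤ Real.sqrt (n+1) := by
          rw [show ((n:ℝ)+1) = ‖wit x c da db‖^2 + ((n+1) - ‖wit x c da db‖^2) by ring]
          calc ‖wit x c da db‖ = Real.sqrt (‖wit x c da db‖^2) := by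
                rw [Real.sqrt_sq (norm_nonneg _)]
          _ ≤ _ := Real.sqrt_le_sqrt (by linarith)
        exact h1
  have hlow : lm i * (Real.sqrt 3)⁻¹ ≤ ⟪u, wit x c da db⟫ := by
    rw [inner_decomp_wit h0 hx hsm hsp hu c da db]
    have t1 : lm i * ((Real.sqrt 3)⁻¹ * (c i - da)) ≤
        ∑ k, lm k * ((Real.sqrt 3)⁻¹ * (c k - da)) := by
      refine Finset.single_le_sum (f := fun k => lm k * ((Real.sqrt 3)⁻¹ * (c k - da)))
        (fun k _ => ?_) (Finset.mem_univ i)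
      skip
      rcases eq_or_ne (lm k) 0 with hk | hk
      · rw [hk]; simp
      · exact mul_nonneg (hm0 k) (mul_nonneg (by positivity) (by linarith [W1 k hk]))
    have t2 : (0:ℝ) ≤ ∑ k, lp k * ((Real.sqrt 3)⁻¹ * (db - c k)) := by
      refine Finset.sum_nonneg fun k _ => ?_
      skip
      rcases eq_or_ne (lp k) 0 with hk | hk
      · rw [hk]; simp
      · exact mul_nonneg (hp0 k) (mul_nonneg (by positivity) (by linarith [W2 k hk]))
    have t3 : (0:ℝ) ≤ la * da := by
      rcases eq_or_ne la 0 with hk | hk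
      · rw [hk]; simp
      · exact mul_nonneg ha0 (W3 hk)
    have t4 : (0:ℝ) ≤ lb * (-db) := by
      rcases eq_or_ne lb 0 with hk | hk
      · rw [hk]; simp
      · exact mul_nonneg hb0 (by linarith [W4 hk])
    have t5 : (0:ℝ) ≤ le * ((Real.sqrt 2)⁻¹ * (db - da)) := by
      rcases eq_or_ne le 0 with hk | hk
      · rw [hk]; simp
      · exact mul_nonneg he0 (mul_nonneg (by positivity) (by linarith [W5 hk]))
    have t6 : lm i * (Real.sqrt 3)⁻¹ ≤ lm i * ((Real.sqrt 3)⁻¹ * (c i - da)) := by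
      have h1 : (Real.sqrt 3)⁻¹ * 1 ≤ (Real.sqrt 3)⁻¹ * (c i - da) := by
        refine mul_le_mul_of_nonneg_left (by linarith) (by positivity)
      calc lm i * (Real.sqrt 3)⁻¹ = lm i * ((Real.sqrt 3)⁻¹ * 1) := by ring
      _ ≤ lm i * ((Real.sqrt 3)⁻¹ * (c i - da)) :=
          mul_le_mul_of_nonneg_left h1 (hm0 i)
    linarith
  have hnn : (0:ℝ) < Real.sqrt 3 := hs3
  have := le_trans hlow hup
  calc lm i = (lm i * (Real.sqrt 3)⁻¹) * Real.sqrt 3 := by field_simp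
  _ ≤ (‖u‖ * Real.sqrt (n+1)) * Real.sqrt 3 :=
      mul_le_mul_of_nonneg_right this (le_of_lt hs3)
  _ = Real.sqrt 3 * Real.sqrt (n+1) * ‖u‖ := by ring

/-- Coefficient bound: each lower-bond coefficient is controlled by the norm. -/
lemma coef_bound {rm rp : ℝ} {x u : CConf d n} (h0 : 0 < rm) (hr : rm < rp)
    (hx : x ∈ Ac d n rm rp) {lm lp : Fin n → ℝ} {la lb le : ℝ}
    (hm0 : ∀ i, 0 ≤ lm i) (hp0 : ∀ i, 0 ≤ lp i) (ha0 : 0 ≤ la) (hb0 : 0 ≤ lb) (he0 : 0 ≤ le)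
    (hsm : ∀ i, lm i ≠ 0 → ((i:ℕ)+1 < n ∧ ‖bv x i‖ = cMin x))
    (hsp : ∀ i, lp i ≠ 0 → ((i:ℕ)+1 < n ∧ ‖bv x i‖ = cMax x))
    (hsa : la ≠ 0 → cMin x = rm) (hsb : lb ≠ 0 → cMax x = rp)
    (hu : u = (∑ i, lm i • cnm' x i) + (∑ i, lp i • cnp' x i)
      + la • cnmin d n + lb • cnmax d n + le • cneq d n)
    (i : Fin n) :
    lm i ≤ Real.sqrt 3 * Real.sqrt (n+1) * ‖u‖ := by
  rcases eq_or_ne (lm i) 0 with hz | hz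
  · rw [hz]; positivity
  obtain ⟨hiv, hia⟩ := hsm i hz
  have hsum_ind : (∑ j, |(fun j => if j = i then (1:ℝ) else 0) j|) = 1 := by
    have : ∀ j : Fin n, |(fun j => if j = i then (1:ℝ) else 0) j|
        = if j = i then (1:ℝ) else 0 := by
      intro j; dsimp only; split_ifs <;> simp
    rw [Finset.sum_congr rfl fun j _ => this j, Finset.sum_ite_eq' Finset.univ i fun _ => (1:ℝ),
      if_pos (Finset.mem_univ i)]
  by_cases hC : ‖bv x i‖ = cMax x
  · by_cases hrm : cMin x = rm
    · -- bond also max-active, all bounds at minimum: raise the max slope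
      refine coef_core h0 hx hm0 hp0 ha0 hb0 he0 hsm hsp hu i
        (fun j => if j = i then 1 else 0) 0 1 ?_ ?_ ?_ ?_ ?_ ?_ ?_
      · intro k _; split_ifs <;> norm_num
      · intro k _; split_ifs <;> norm_num
      · intro _; exact le_rfl
      · intro hlb
        exfalso
        have h1 := hsb hlb
        have hab : cMax x = cMin x := by rw [← hia, hC]
        rw [hab, hrm] at h1
        exact (ne_of_lt hr) h1
      · intro _; norm_num
      · simp
      · calc ‖wit x _ 0 1‖^2 ≤ n * (∑ j, |(fun j => if j = i then (1:ℝ) else 0) j|)^2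
            + 0^2 + 1^2 := norm_wit_sq_le x _ 0 1
        _ ≤ n + 1 := by rw [hsum_ind]; norm_num
    · -- bond also max-active but min bound slack: lower the min slope
      refine coef_core h0 hx hm0 hp0 ha0 hb0 he0 hsm hsp hu i
        (fun _ => 0) (-1) 0 ?_ ?_ ?_ ?_ ?_ ?_ ?_
      · intro k _; norm_num
      · intro k _; norm_num
      · intro hla; exact absurd (hsa hla) hrm
      · intro _; exact le_rfl
      · intro _; norm_num
      · norm_num
      · calc ‖wit x _ (-1) 0‖^2 ≤ n * (∑ j : Fin n, |(0:ℝ)|)^2 + (-1:ℝ)^2 + 0^2 :=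
            norm_wit_sq_le x _ (-1) 0
        _ ≤ n + 1 := by simp
  · -- bond not max-active: stretch bond i only
    refine coef_core h0 hx hm0 hp0 ha0 hb0 he0 hsm hsp hu i
      (fun j => if j = i then 1 else 0) 0 0 ?_ ?_ ?_ ?_ ?_ ?_ ?_
    · intro k _; split_ifs <;> norm_num
    · intro k hk
      skip
      rcases eq_or_ne k i with hki | hki
      · subst hki; exact absurd (hsp k hk).2 hC
      · rw [if_neg hki]
    · intro _; exact le_rfl
    · intro _; exact le_rfl
    · intro _; exact le_rfl
    · simp
    · calc ‖wit x _ 0 0‖^2 ≤ n * (∑ j, |(fun j => if j = i then (1:ℝ) else 0) j|)^2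
          + 0^2 + 0^2 := norm_wit_sq_le x _ 0 0
      _ ≤ n + 1 := by rw [hsum_ind]; norm_num

end
end S15
namespace S15
noncomputable section
variable {d n : ℕ}

/-- The fundamental estimate for elements of the normal cone. -/
lemma kone_estimate {rm rp : ℝ} (h0 : 0 < rm) (hr : rm < rp) {x y u : CConf d n}
    (hx : x ∈ Ac d n rm rp) (hy : y ∈ Ac d n rm rp) (hu : u ∈ Kone rm rp x) :
    ⟪u, x - y⟫ ≤ ‖u‖ * (2 * Real.sqrt (n+1) / rm) * ‖x - y‖ ^ 2 := by
  obtain ⟨lm, lp, la, lb, le, hm0, hp0, ha0, hb0, he0, hsm, hsp, hsa, hsb, hse, hdec⟩ := hu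
  have hs3 := sqrt3_pos
  have hcm := cMin_pos h0 hx
  rw [inner_decomp hdec]
  set M := Real.sqrt 3 * Real.sqrt (n+1) * ‖u‖ with hM
  have hM0 : 0 ≤ M := by positivity
  set Q : Fin n → ℝ := fun k => ‖bv (x - y) k‖ ^ 2 / (Real.sqrt 3 * (2 * cMin x)) with hQ
  have hQ0 : ∀ k, 0 ≤ Q k := fun k => by rw [hQ]; positivity
  have hT1 : ∑ k, lm k * ⟪cnm' x k, x - y⟫ ≤ ∑ k, lm k * Q k := by
    refine Finset.sum_le_sum fun k _ => ?_
    rcases eq_or_ne (lm k) 0 with hk | hk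
    · rw [hk, zero_mul, zero_mul]
    · obtain ⟨hkv, hka⟩ := hsm k hk
      refine mul_le_mul_of_nonneg_left ?_ (hm0 k)
      rw [cnm', dif_pos hkv, hQ]
      dsimp only
      rw [bv_sub]
      exact est_cnm hx hy h0 k hkv hka
  have hT1' : ∑ k, lm k * Q k ≤ M * ∑ k, Q k := by
    rw [Finset.mul_sum]
    refine Finset.sum_le_sum fun k _ => mul_le_mul_of_nonneg_right
      (coef_bound h0 hr hx hm0 hp0 ha0 hb0 he0 hsm hsp hsa hsb hdec k) (hQ0 k)
  have hSQ : ∑ k, Q k ≤ (4 * ‖x - y‖ ^ 2) / (Real.sqrt 3 * (2 * rm)) := by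
    rw [hQ, ← Finset.sum_div]
    have h1 : ∑ k, ‖bv (x - y) k‖ ^ 2 ≤ 4 * ‖x - y‖ ^ 2 := sum_bv_sq_le (x - y)
    have h2 : (0:ℝ) ≤ ∑ k, ‖bv (x - y) k‖ ^ 2 :=
      Finset.sum_nonneg fun k _ => sq_nonneg _
    calc (∑ k, ‖bv (x - y) k‖ ^ 2) / (Real.sqrt 3 * (2 * cMin x))
        ≤ (4 * ‖x - y‖ ^ 2) / (Real.sqrt 3 * (2 * cMin x)) := by gcongr
      _ ≤ (4 * ‖x - y‖ ^ 2) / (Real.sqrt 3 * (2 * rm)) := by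
          have := (mem_Ac_iff.1 hx).1
          gcongr
  have hT2 : ∑ k, lp k * ⟪cnp' x k, x - y⟫ ≤ 0 := by
    refine Finset.sum_nonpos fun k _ => ?_
    rcases eq_or_ne (lp k) 0 with hk | hk
    · rw [hk, zero_mul]
    · obtain ⟨hkv, hka⟩ := hsp k hk
      refine mul_nonpos_of_nonneg_of_nonpos (hp0 k) ?_
      rw [cnp', dif_pos hkv]
      exact est_cnp hx hy h0 k hkv hka
  have hT3 : la * ⟪cnmin d n, x - y⟫ ≤ 0 := by
    rcases eq_or_ne la 0 with hk | hk
    · rw [hk, zero_mul]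
    · exact mul_nonpos_of_nonneg_of_nonpos ha0 (est_cnmin hy (hsa hk))
  have hT4 : lb * ⟪cnmax d n, x - y⟫ ≤ 0 := by
    rcases eq_or_ne lb 0 with hk | hk
    · rw [hk, zero_mul]
    · exact mul_nonpos_of_nonneg_of_nonpos hb0 (est_cnmax hy (hsb hk))
  have hT5 : le * ⟪cneq d n, x - y⟫ ≤ 0 := by
    rcases eq_or_ne le 0 with hk | hk
    · rw [hk, zero_mul]
    · exact mul_nonpos_of_nonneg_of_nonpos he0 (est_cneq hy (hse hk))
  have hfin : M * ((4 * ‖x - y‖ ^ 2) / (Real.sqrt 3 * (2 * rm)))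
      = ‖u‖ * (2 * Real.sqrt (n+1) / rm) * ‖x - y‖ ^ 2 := by
    rw [hM]
    field_simp
    ring
  have hchain : ∑ k, lm k * ⟪cnm' x k, x - y⟫ ≤ ‖u‖ * (2 * Real.sqrt (n+1) / rm) * ‖x - y‖ ^ 2 := by
    rw [← hfin]
    calc ∑ k, lm k * ⟪cnm' x k, x - y⟫ ≤ M * ∑ k, Q k := le_trans hT1 hT1'
    _ ≤ M * ((4 * ‖x - y‖ ^ 2) / (Real.sqrt 3 * (2 * rm))) :=
        mul_le_mul_of_nonneg_left hSQ hM0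
  linarith

lemma zero_mem_Kone {rm rp : ℝ} (x : CConf d n) : (0:CConf d n) ∈ Kone rm rp x := by
  refine ⟨0, 0, 0, 0, 0, fun _ => le_rfl, fun _ => le_rfl, le_rfl, le_rfl, le_rfl,
    fun i hi => absurd rfl hi, fun i hi => absurd rfl hi, fun hi => absurd rfl hi,
    fun hi => absurd rfl hi, fun hi => absurd rfl hi, ?_⟩
  simp

lemma Kone_smul {rm rp : ℝ} {x u : CConf d n} {t : ℝ} (ht : 0 ≤ t)
    (hu : u ∈ Kone rm rp x) : t • u ∈ Kone rm rp x := by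
  obtain ⟨lm, lp, la, lb, le, hm0, hp0, ha0, hb0, he0, hsm, hsp, hsa, hsb, hse, hdec⟩ := hu
  refine ⟨fun i => t * lm i, fun i => t * lp i, t * la, t * lb, t * le,
    fun i => mul_nonneg ht (hm0 i), fun i => mul_nonneg ht (hp0 i),
    mul_nonneg ht ha0, mul_nonneg ht hb0, mul_nonneg ht he0,
    fun i hi => hsm i (by intro h; exact hi (by simp [h])),
    fun i hi => hsp i (by intro h; exact hi (by simp [h])),
    fun hi => hsa (by intro h; exact hi (by simp [h])),
    fun hi => hsb (by intro h; exact hi (by simp [h])),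
    fun hi => hse (by intro h; exact hi (by simp [h])), ?_⟩
  rw [hdec]
  rw [smul_add, smul_add, smul_add, smul_add, Finset.smul_sum, Finset.smul_sum]
  simp only [smul_smul]

lemma Kone_add {rm rp : ℝ} {x u v : CConf d n}
    (hu : u ∈ Kone rm rp x) (hv : v ∈ Kone rm rp x) : u + v ∈ Kone rm rp x := by
  obtain ⟨lm, lp, la, lb, le, hm0, hp0, ha0, hb0, he0, hsm, hsp, hsa, hsb, hse, hdec⟩ := hu
  obtain ⟨km, kp, ka, kb, ke, gm0, gp0, ga0, gb0, ge0, gsm, gsp, gsa, gsb, gse, gdec⟩ := hv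
  have hadd : ∀ (a b : ℝ), 0 ≤ a → 0 ≤ b → a + b ≠ 0 → (a ≠ 0 ∨ b ≠ 0) := by
    intro a b ha hb hab
    by_contra hc
    push_neg at hc
    exact hab (by rw [hc.1, hc.2, add_zero])
  refine ⟨fun i => lm i + km i, fun i => lp i + kp i, la + ka, lb + kb, le + ke,
    fun i => add_nonneg (hm0 i) (gm0 i), fun i => add_nonneg (hp0 i) (gp0 i),
    add_nonneg ha0 ga0, add_nonneg hb0 gb0, add_nonneg he0 ge0,
    fun i hi => (hadd _ _ (hm0 i) (gm0 i) hi).elim (hsm i) (gsm i),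
    fun i hi => (hadd _ _ (hp0 i) (gp0 i) hi).elim (hsp i) (gsp i),
    fun hi => (hadd _ _ ha0 ga0 hi).elim hsa gsa,
    fun hi => (hadd _ _ hb0 gb0 hi).elim hsb gsb,
    fun hi => (hadd _ _ he0 ge0 hi).elim hse gse, ?_⟩
  rw [hdec, gdec]
  simp only [add_smul, Finset.sum_add_distrib]
  abel

lemma Kone_convex {rm rp : ℝ} (x : CConf d n) : Convex ℝ (Kone rm rp x) := by
  intro u hu v hv a b ha hb hab
  exact Kone_add (Kone_smul ha hu) (Kone_smul hb hv)

lemma indsum {G : Type*} [AddCommMonoid G] [Module ℝ G] (i : Fin n) (g : Fin n → G) :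
    ∑ k, (if k = i then (1:ℝ) else 0) • g k = g i := by
  have : ∀ k, (if k = i then (1:ℝ) else 0) • g k = if k = i then g k else 0 := by
    intro k; split_ifs <;> simp
  rw [Finset.sum_congr rfl fun k _ => this k, Finset.sum_ite_eq' Finset.univ i g,
    if_pos (Finset.mem_univ i)]

lemma cnm_mem_Kone {rm rp : ℝ} {x : CConf d n} (i : Fin n) (h : (i:ℕ)+1 < n)
    (hact : ‖bv x i‖ = cMin x) : cnm x i h ∈ Kone rm rp x := by
  refine ⟨fun k => if k = i then 1 else 0, 0, 0, 0, 0,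
    fun k => by dsimp only; split_ifs <;> norm_num, fun _ => le_rfl, le_rfl, le_rfl, le_rfl,
    ?_, fun k hk => absurd rfl hk, fun hk => absurd rfl hk, fun hk => absurd rfl hk,
    fun hk => absurd rfl hk, ?_⟩
  · intro k hk
    dsimp only at hk
    rcases eq_or_ne k i with hki | hki
    · subst hki; exact ⟨h, hact⟩
    · rw [if_neg hki] at hk; exact absurd rfl hk
  · rw [indsum i (cnm' x), cnm', dif_pos h]
    simp

lemma cnp_mem_Kone {rm rp : ℝ} {x : CConf d n} (i : Fin n) (h : (i:ℕ)+1 < n)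
    (hact : ‖bv x i‖ = cMax x) : cnp x i h ∈ Kone rm rp x := by
  refine ⟨0, fun k => if k = i then 1 else 0, 0, 0, 0,
    fun _ => le_rfl, fun k => by dsimp only; split_ifs <;> norm_num, le_rfl, le_rfl, le_rfl,
    fun k hk => absurd rfl hk, ?_, fun hk => absurd rfl hk, fun hk => absurd rfl hk,
    fun hk => absurd rfl hk, ?_⟩
  · intro k hk
    dsimp only at hk
    rcases eq_or_ne k i with hki | hki
    · subst hki; exact ⟨h, hact⟩
    · rw [if_neg hki] at hk; exact absurd rfl hk
  · rw [indsum i (cnp' x), cnp', dif_pos h]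
    simp

lemma cnmin_mem_Kone {rm rp : ℝ} {x : CConf d n} (hact : cMin x = rm) :
    cnmin d n ∈ Kone rm rp x := by
  refine ⟨0, 0, 1, 0, 0, fun _ => le_rfl, fun _ => le_rfl, by norm_num, le_rfl, le_rfl,
    fun k hk => absurd rfl hk, fun k hk => absurd rfl hk, fun _ => hact,
    fun hk => absurd rfl hk, fun hk => absurd rfl hk, ?_⟩
  simp

lemma cnmax_mem_Kone {rm rp : ℝ} {x : CConf d n} (hact : cMax x = rp) :
    cnmax d n ∈ Kone rm rp x := by
  refine ⟨0, 0, 0, 1, 0, fun _ => le_rfl, fun _ => le_rfl, le_rfl, by norm_num, le_rfl,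
    fun k hk => absurd rfl hk, fun k hk => absurd rfl hk, fun hk => absurd rfl hk,
    fun _ => hact, fun hk => absurd rfl hk, ?_⟩
  simp

lemma cneq_mem_Kone {rm rp : ℝ} {x : CConf d n} (hact : cMin x = cMax x) :
    cneq d n ∈ Kone rm rp x := by
  refine ⟨0, 0, 0, 0, 1, fun _ => le_rfl, fun _ => le_rfl, le_rfl, le_rfl, by norm_num,
    fun k hk => absurd rfl hk, fun k hk => absurd rfl hk, fun hk => absurd rfl hk,
    fun hk => absurd rfl hk, fun _ => hact, ?_⟩
  simp

/-- Hahn–Banach duality: a vector nonnegative against the dual of a convex cone lies in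
its closure. -/
lemma mem_closure_cone {C : Set (CConf d n)} (hC0 : (0:CConf d n) ∈ C)
    (hCs : ∀ t : ℝ, 0 ≤ t → ∀ u ∈ C, t • u ∈ C) (hconv : Convex ℝ C) {v : CConf d n}
    (hv : ∀ w, (∀ u ∈ C, 0 ≤ ⟪u, w⟫) → 0 ≤ ⟪v, w⟫) : v ∈ closure C := by
  haveI : ContinuousSMul ℝ (CConf d n) := IsBoundedSMul.continuousSMul; by_contra hnc
  obtain ⟨f, s, hfs, hsv⟩ :=
    geometric_hahn_banach_closed_point hconv.closure isClosed_closure hnc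
  have h00 : (0:ℝ) < s := by
    have := hfs 0 (subset_closure hC0)
    simpa using this
  have hfa : ∀ u ∈ C, f u ≤ 0 := by
    intro u hu
    by_contra hfu
    push_neg at hfu
    have hmem : (s / f u + 1) • u ∈ C := hCs _ (by positivity) u hu
    have hlt := hfs _ (subset_closure hmem)
    rw [map_smul, smul_eq_mul] at hlt
    have : (s / f u + 1) * f u = s + f u := by field_simp
    rw [this] at hlt
    linarith
  obtain ⟨w, hw⟩ : ∃ w : CConf d n, ∀ z, f z = ⟪w, z⟫ := by
    refine ⟨(InnerProductSpace.toDual ℝ (CConf d n)).symm f, fun z => ?_⟩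
    simp [InnerProductSpace.toDual_symm_apply]
  have hneg : ∀ u ∈ C, 0 ≤ ⟪u, -w⟫ := by
    intro u hu
    rw [inner_neg_right, real_inner_comm, ← hw]
    linarith [hfa u hu]
  have hfv := hv (-w) hneg
  rw [inner_neg_right, real_inner_comm, ← hw] at hfv
  linarith

/-- The estimate extends to the closure of the cone. -/
lemma closure_estimate {rm rp : ℝ} (h0 : 0 < rm) (hr : rm < rp) {x y v : CConf d n}
    (hx : x ∈ Ac d n rm rp) (hy : y ∈ Ac d n rm rp)
    (hv : v ∈ closure (Kone rm rp x)) :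
    ⟪v, x - y⟫ ≤ ‖v‖ * (2 * Real.sqrt (n+1) / rm) * ‖x - y‖ ^ 2 := by
  set S : Set (CConf d n) :=
    {u | ⟪u, x - y⟫ - ‖u‖ * (2 * Real.sqrt (n+1) / rm) * ‖x - y‖ ^ 2 ≤ 0} with hS
  have hclosed : IsClosed S := by
    refine isClosed_le ?_ continuous_const
    exact (continuous_id.inner continuous_const).sub
      ((continuous_norm.mul continuous_const).mul continuous_const)
  have hsub : Kone rm rp x ⊆ S := by
    intro u hu
    have := kone_estimate h0 hr hx hy hu
    simp only [hS, Set.mem_setOf_eq]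
    linarith
  have := closure_minimal hsub hclosed hv
  simp only [hS, Set.mem_setOf_eq] at this
  linarith

end
end S15
namespace S15
noncomputable section
variable {d n : ℕ}

lemma ev_const_lt {f : ℝ → ℝ} (hf : Continuous f) {c : ℝ} (h : c < f 0) :
    ∀ᶠ t in nhdsWithin (0:ℝ) (Set.Ioi 0), c < f t :=
  ((hf.tendsto 0).mono_left nhdsWithin_le_nhds).eventually_const_lt h

lemma ev_lt_const {f : ℝ → ℝ} (hf : Continuous f) {c : ℝ} (h : f 0 < c) :
    ∀ᶠ t in nhdsWithin (0:ℝ) (Set.Ioi 0), f t < c :=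
  ((hf.tendsto 0).mono_left nhdsWithin_le_nhds).eventually_lt_const h

lemma ev_pos : ∀ᶠ t in nhdsWithin (0:ℝ) (Set.Ioi 0), 0 < t := by
  filter_upwards [self_mem_nhdsWithin] with t ht using ht

lemma tendsto_mul_const (c : ℝ) :
    Filter.Tendsto (fun t : ℝ => t * c) (nhdsWithin (0:ℝ) (Set.Ioi 0)) (nhds 0) := by
  have h : Continuous (fun t : ℝ => t * c) := by continuity
  have := (h.tendsto 0).mono_left (nhdsWithin_le_nhds (s := Set.Ioi (0:ℝ)))
  simpa using this

lemma norm_add_smul_sq {E : Type*} [NormedAddCommGroup E] [InnerProductSpace ℝ E]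
    (z w' : E) (t : ℝ) :
    ‖z + t • w'‖^2 = ‖z‖^2 + 2*t*⟪z, w'⟫ + t^2*‖w'‖^2 := by
  rw [norm_add_sq_real, real_inner_smul_right, norm_smul, Real.norm_eq_abs, mul_pow, sq_abs]
  ring

/-- Strictly inward directions can be followed into `Ac` for a short time. -/
lemma tangent {rm rp : ℝ} {x : CConf d n} (h0 : 0 < rm) (hx : x ∈ Ac d n rm rp)
    (w : CConf d n)
    (H1 : cMin x = rm → 0 < cMin w)
    (H2 : cMax x = rp → cMax w < 0)
    (H3 : cMin x = cMax x → cMin w < cMax w)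
    (H4 : ∀ i : Fin n, (i:ℕ)+1 < n → ‖bv x i‖ = cMin x → cMin x * cMin w < ⟪bv x i, bv w i⟫)
    (H5 : ∀ i : Fin n, (i:ℕ)+1 < n → ‖bv x i‖ = cMax x → ⟪bv x i, bv w i⟫ < cMax x * cMax w) :
    ∀ᶠ t in nhdsWithin (0:ℝ) (Set.Ioi 0), x + t • w ∈ Ac d n rm rp := by
  obtain ⟨hx1, hx2, hx3, hx4⟩ := mem_Ac_iff.1 hx
  have hcm : 0 < cMin x := lt_of_lt_of_le h0 hx1
  have hcM : 0 < cMax x := lt_of_lt_of_le hcm hx2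
  have C1 : ∀ᶠ t in nhdsWithin (0:ℝ) (Set.Ioi 0), rm ≤ cMin x + t * cMin w := by
    rcases eq_or_lt_of_le hx1 with he | hlt
    · have hw := H1 he.symm
      filter_upwards [ev_pos] with t ht
      nlinarith
    · have := ev_const_lt (f := fun t => cMin x + t * cMin w)
        (continuous_const.add (continuous_id.mul continuous_const)) (c := rm) (by simpa using hlt)
      filter_upwards [this] with t ht using le_of_lt ht
  have C2 : ∀ᶠ t in nhdsWithin (0:ℝ) (Set.Ioi 0),
      cMin x + t * cMin w ≤ cMax x + t * cMax w := by
    rcases eq_or_lt_of_le hx2 with he | hlt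
    · have hw := H3 he
      filter_upwards [ev_pos] with t ht
      nlinarith
    · have := ev_const_lt (f := fun t => (cMax x + t * cMax w) - (cMin x + t * cMin w))
        ((continuous_const.add (continuous_id.mul continuous_const)).sub (continuous_const.add (continuous_id.mul continuous_const))) (c := 0) (by simpa using hlt)
      filter_upwards [this] with t ht
      linarith
  have C3 : ∀ᶠ t in nhdsWithin (0:ℝ) (Set.Ioi 0), cMax x + t * cMax w ≤ rp := by
    rcases eq_or_lt_of_le hx3 with he | hlt
    · have hw := H2 he
      filter_upwards [ev_pos] with t ht
      nlinarith
    · have := ev_lt_const (f := fun t => cMax x + t * cMax w)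
        (continuous_const.add (continuous_id.mul continuous_const)) (c := rp) (by simpa using hlt)
      filter_upwards [this] with t ht using le_of_lt ht
  have C4 : ∀ i : Fin n, ∀ᶠ t in nhdsWithin (0:ℝ) (Set.Ioi 0),
      ((i:ℕ)+1 < n → (cMin x + t * cMin w ≤ ‖bv x i + t • bv w i‖ ∧
        ‖bv x i + t • bv w i‖ ≤ cMax x + t * cMax w)) := by
    intro i
    by_cases hi : (i:ℕ)+1 < n
    · have P1 : ∀ᶠ t in nhdsWithin (0:ℝ) (Set.Ioi 0),
          cMin x + t * cMin w ≤ ‖bv x i + t • bv w i‖ := by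
        rcases eq_or_lt_of_le (hx4 i hi).1 with he | hlt
        · have hkey := H4 i hi he.symm
          filter_upwards [ev_pos] with t ht
          have hia : ‖bv x i‖ = cMin x := he.symm
          have hinner : ⟪bv x i, bv x i + t • bv w i⟫
              = ‖bv x i‖^2 + t * ⟪bv x i, bv w i⟫ := by
            rw [inner_add_right, real_inner_smul_right, real_inner_self_eq_norm_sq]
          have hcs : ⟪bv x i, bv x i + t • bv w i⟫ ≤ ‖bv x i‖ * ‖bv x i + t • bv w i‖ :=
            real_inner_le_norm _ _
          rw [hia] at hinner hcs
          have hprod : t * (cMin x * cMin w) ≤ t * ⟪bv x i, bv w i⟫ :=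
            mul_le_mul_of_nonneg_left (le_of_lt hkey) (le_of_lt ht)
          have h5 : cMin x * (cMin x + t * cMin w) ≤ cMin x * ‖bv x i + t • bv w i‖ := by
            nlinarith [hinner, hcs, hprod]
          exact le_of_mul_le_mul_left h5 hcm
        · have := ev_const_lt
            (f := fun t => ‖bv x i + t • bv w i‖ - (cMin x + t * cMin w))
            (((continuous_const.add (continuous_id.smul continuous_const)).norm).sub (continuous_const.add (continuous_id.mul continuous_const))) (c := 0) (by simpa using hlt)
          filter_upwards [this] with t ht
          linarith
      have P2 : ∀ᶠ t in nhdsWithin (0:ℝ) (Set.Ioi 0),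
          ‖bv x i + t • bv w i‖ ≤ cMax x + t * cMax w := by
        rcases eq_or_lt_of_le (hx4 i hi).2 with he | hlt
        · have hkey := H5 i hi he
          set ε := cMax x * cMax w - ⟪bv x i, bv w i⟫ with hε
          have hεpos : 0 < ε := by rw [hε]; linarith
          have e1 : ∀ᶠ t in nhdsWithin (0:ℝ) (Set.Ioi 0),
              t < 2 * ε / (‖bv w i‖^2 + (cMax w)^2 + 1) := by
            refine ev_lt_const (f := fun t => t) continuous_id ?_
            positivity
          have e2 : ∀ᶠ t in nhdsWithin (0:ℝ) (Set.Ioi 0),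
              t < cMax x / (|cMax w| + 1) := by
            refine ev_lt_const (f := fun t => t) continuous_id ?_
            positivity
          filter_upwards [ev_pos, e1, e2] with t ht ht1 ht2
          have hb0 : 0 ≤ cMax x + t * cMax w := by
            have h1 : t * (|cMax w| + 1) < cMax x := by
              rw [← lt_div_iff₀ (by positivity)]
              exact ht2
            have h2 : -(t * |cMax w|) ≤ t * cMax w := by
              nlinarith [neg_abs_le (cMax w)]
            linarith
          have hsmall : t * (‖bv w i‖^2 + (cMax w)^2 + 1) < 2 * ε := by
            have h1 := mul_lt_mul_of_pos_right ht1 (show (0:ℝ) < ‖bv w i‖^2 + (cMax w)^2 + 1 by positivity)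
            rwa [div_mul_cancel₀] at h1
            positivity
          have hsq : ‖bv x i + t • bv w i‖^2 ≤ (cMax x + t * cMax w)^2 := by
            rw [norm_add_smul_sq, he]
            nlinarith [sq_nonneg t]
          nlinarith [norm_nonneg (bv x i + t • bv w i), hb0, hsq]
        · have := ev_lt_const
            (f := fun t => ‖bv x i + t • bv w i‖ - (cMax x + t * cMax w))
            (((continuous_const.add (continuous_id.smul continuous_const)).norm).sub (continuous_const.add (continuous_id.mul continuous_const))) (c := 0) (by simpa using hlt)
          filter_upwards [this] with t ht
          linarith
      filter_upwards [P1, P2] with t h1 h2 using fun _ => ⟨h1, h2⟩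
    · filter_upwards with t using fun hcon => absurd hcon hi
  filter_upwards [C1, C2, C3, Filter.eventually_all.2 C4] with t h1 h2 h3 h4
  refine mem_Ac_iff.2 ⟨?_, ?_, ?_, ?_⟩
  · rw [cMin_add, cMin_smul]; exact h1
  · rw [cMin_add, cMin_smul, cMax_add, cMax_smul]; exact h2
  · rw [cMax_add, cMax_smul]; exact h3
  · intro i hi
    rw [cMin_add, cMin_smul, cMax_add, cMax_smul, bv_add, bv_smul]
    exact h4 i hi

end
end S15
namespace S15
noncomputable section
variable {d n : ℕ}

lemma inner_bv_wit (x : CConf d n) (c : Fin n → ℝ) (da db : ℝ) (k : Fin n)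
    (hk : (k:ℕ)+1 < n) :
    ⟪bv x k, bv (wit x c da db) k⟫ = c k * ‖bv x k‖ := by
  rw [bv_wit x c da db k hk, real_inner_smul_right, inner_bv_ub]

/-- Any proximal normal pairs nonnegatively with weakly inward directions. -/
lemma normal_dual {rm rp : ℝ} (h0 : 0 < rm) (hr : rm < rp) {x v : CConf d n}
    (hx : x ∈ Ac d n rm rp) (hv : v ∈ normalCone (Ac d n rm rp) x)
    (w : CConf d n)
    (G1 : cMin x = rm → 0 ≤ cMin w)
    (G2 : cMax x = rp → cMax w ≤ 0)
    (G3 : cMin x = cMax x → cMin w ≤ cMax w)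
    (G4 : ∀ i : Fin n, (i:ℕ)+1 < n → ‖bv x i‖ = cMin x → cMin x * cMin w ≤ ⟪bv x i, bv w i⟫)
    (G5 : ∀ i : Fin n, (i:ℕ)+1 < n → ‖bv x i‖ = cMax x → ⟪bv x i, bv w i⟫ ≤ cMax x * cMax w) :
    0 ≤ ⟪v, w⟫ := by
  have hcm : 0 < cMin x := cMin_pos h0 hx
  have hcM : 0 < cMax x := cMax_pos h0 hx
  -- unpack the normal cone membership
  simp only [normalCone, Set.mem_iUnion, Set.mem_Ioi] at hv
  obtain ⟨β, hβ, hvn, hball⟩ := hv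
  have hineq := (ball_inter_empty_iff hvn hβ).1 hball
  -- a strictly inward direction
  obtain ⟨w0, S1, S2, S3, S4, S5⟩ : ∃ w0 : CConf d n,
      (cMin x = rm → 0 < cMin w0) ∧ (cMax x = rp → cMax w0 < 0) ∧
      (cMin x = cMax x → cMin w0 < cMax w0) ∧
      (∀ i : Fin n, (i:ℕ)+1 < n → ‖bv x i‖ = cMin x →
        cMin x * cMin w0 < ⟪bv x i, bv w0 i⟫) ∧
      (∀ i : Fin n, (i:ℕ)+1 < n → ‖bv x i‖ = cMax x →
        ⟪bv x i, bv w0 i⟫ < cMax x * cMax w0) := by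
    by_cases heq : cMin x = cMax x
    · by_cases hbm : cMax x = rp
      · -- all bond lengths equal to the maximal bound rp
        refine ⟨wit x (fun _ => -2) (-3) (-1), ?_, ?_, ?_, ?_, ?_⟩
        · intro hmin
          exfalso
          rw [heq, hbm] at hmin
          exact (ne_of_lt hr) hmin.symm
        · intro _; rw [cMax_wit]; norm_num
        · intro _; rw [cMin_wit, cMax_wit]; norm_num
        · intro i hi hact
          rw [cMin_wit, inner_bv_wit x _ _ _ i hi, hact]
          nlinarith
        · intro i hi hact
          rw [cMax_wit, inner_bv_wit x _ _ _ i hi, hact]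
          nlinarith
      · -- all bond lengths equal, below rp
        refine ⟨wit x (fun _ => 2) 1 3, ?_, ?_, ?_, ?_, ?_⟩
        · intro _; rw [cMin_wit]; norm_num
        · intro hmax; exact absurd hmax hbm
        · intro _; rw [cMin_wit, cMax_wit]; norm_num
        · intro i hi hact
          rw [cMin_wit, inner_bv_wit x _ _ _ i hi, hact]
          nlinarith
        · intro i hi hact
          rw [cMax_wit, inner_bv_wit x _ _ _ i hi, hact]
          nlinarith
    · -- the two bounds are distinct
      refine ⟨wit x (fun k => if ‖bv x k‖ = cMax x then -2 else 2) 1 (-1), ?_, ?_, ?_, ?_, ?_⟩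
      · intro _; rw [cMin_wit]; norm_num
      · intro _; rw [cMax_wit]; norm_num
      · intro hmin; exact absurd hmin heq
      · intro i hi hact
        have hne : ¬ (‖bv x i‖ = cMax x) := by rw [hact]; exact heq
        rw [cMin_wit, inner_bv_wit x _ _ _ i hi, if_neg hne, hact]
        nlinarith
      · intro i hi hact
        rw [cMax_wit, inner_bv_wit x _ _ _ i hi, if_pos hact, hact]
        nlinarith
  -- for every ε > 0, the perturbed direction is strictly inward
  have hstep : ∀ ε : ℝ, 0 < ε → 0 ≤ ⟪v, w⟫ + ε * ⟪v, w0⟫ := by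
    intro ε hε
    have hH1 : cMin x = rm → 0 < cMin (w + ε • w0) := by
      intro hmin
      rw [cMin_add, cMin_smul]
      have := G1 hmin
      have := S1 hmin
      nlinarith
    have hH2 : cMax x = rp → cMax (w + ε • w0) < 0 := by
      intro hmax
      rw [cMax_add, cMax_smul]
      have := G2 hmax
      have := S2 hmax
      nlinarith
    have hH3 : cMin x = cMax x → cMin (w + ε • w0) < cMax (w + ε • w0) := by
      intro heq2
      rw [cMin_add, cMin_smul, cMax_add, cMax_smul]
      have := G3 heq2
      have := S3 heq2
      nlinarith
    have hH4 : ∀ i : Fin n, (i:ℕ)+1 < n → ‖bv x i‖ = cMin x →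
        cMin x * cMin (w + ε • w0) < ⟪bv x i, bv (w + ε • w0) i⟫ := by
      intro i hi hact
      rw [cMin_add, cMin_smul, bv_add, bv_smul, inner_add_right, real_inner_smul_right]
      have := G4 i hi hact
      have := S4 i hi hact
      nlinarith
    have hH5 : ∀ i : Fin n, (i:ℕ)+1 < n → ‖bv x i‖ = cMax x →
        ⟪bv x i, bv (w + ε • w0) i⟫ < cMax x * cMax (w + ε • w0) := by
      intro i hi hact
      rw [cMax_add, cMax_smul, bv_add, bv_smul, inner_add_right, real_inner_smul_right]
      have := G5 i hi hact
      have := S5 i hi hact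
      nlinarith
    have htan := tangent h0 hx (w + ε • w0) hH1 hH2 hH3 hH4 hH5
    have hev : ∀ᶠ t in nhdsWithin (0:ℝ) (Set.Ioi 0),
        -⟪v, w + ε • w0⟫ ≤ t * (‖w + ε • w0‖^2 / (2 * β)) := by
      filter_upwards [htan, ev_pos] with t hmem ht
      have h1 := hineq (x + t • (w + ε • w0)) hmem
      have h2 : x - (x + t • (w + ε • w0)) = -(t • (w + ε • w0)) := by abel
      rw [h2, inner_neg_right, real_inner_smul_right] at h1
      have h3 : ‖-(t • (w + ε • w0))‖^2 = t^2 * ‖w + ε • w0‖^2 := by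
        rw [norm_neg, norm_smul, Real.norm_eq_abs, mul_pow, sq_abs]
      rw [h3] at h1
      rw [div_eq_mul_inv]
      have hβ' : (0:ℝ) < (2 * β)⁻¹ := by positivity
      have hb0 : (2*β) ≠ 0 := by positivity
      have h6 : -⟪v, w + ε • w0⟫ * (2 * β) ≤ t * ‖w + ε • w0‖^2 := by nlinarith
      calc -⟪v, w + ε • w0⟫ = -⟪v, w + ε • w0⟫ * ((2*β) * (2*β)⁻¹) := by
            rw [mul_inv_cancel₀ hb0, mul_one]
      _ = (-⟪v, w + ε • w0⟫ * (2*β)) * (2*β)⁻¹ := by ring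
      _ ≤ (t * ‖w + ε • w0‖^2) * (2*β)⁻¹ := mul_le_mul_of_nonneg_right h6 (le_of_lt hβ')
      _ = t * (‖w + ε • w0‖^2 * (2*β)⁻¹) := by ring
    have htend := tendsto_mul_const (‖w + ε • w0‖^2 / (2 * β))
    have h6 : -⟪v, w + ε • w0⟫ ≤ 0 := ge_of_tendsto htend hev
    have h5 : ⟪v, w + ε • w0⟫ = ⟪v, w⟫ + ε * ⟪v, w0⟫ := by
      rw [inner_add_right, real_inner_smul_right]
    rw [h5] at h6
    linarith
  -- pass to the limit ε → 0
  rcases le_or_gt ⟪v, w0⟫ 0 with hc | hc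
  · have h1 := hstep 1 one_pos
    nlinarith
  · by_contra hneg
    push_neg at hneg
    have hnw : 0 < -⟪v, w⟫ := by linarith
    have hε : 0 < -⟪v, w⟫ / (2 * ⟪v, w0⟫) := by positivity
    have h2 := hstep _ hε
    set A := ⟪v, w⟫ with hA
    set B := ⟪v, w0⟫ with hB
    have hBne : B ≠ 0 := ne_of_gt hc
    have h3 : -A / (2 * B) * B = -A / 2 := by
      field_simp
    rw [h3] at h2
    linarith

end
end S15

set_option maxHeartbeats 2000000 in
open S15 in
/-- The set `A_c` of allowed chain configurations satisfies the Uniform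
Exterior Sphere property with constant `α = r₋²/(2 r₊ n √(2n))`. -/
theorem stmt_15 (d n : ℕ) (hd : 2 ≤ d) (hn : 2 ≤ n) (rm rp : ℝ)
    (h0 : 0 < rm) (hr : rm < rp) :
    UES (Ac d n rm rp) (rm ^ 2 / (2 * rp * n * Real.sqrt (2 * n))) := by
  intro x hx
  set α := rm ^ 2 / (2 * rp * (n:ℝ) * Real.sqrt (2 * (n:ℝ))) with hα
  have hn2 : (2:ℝ) ≤ (n:ℝ) := by exact_mod_cast hn
  have hnpos : (0:ℝ) < (n:ℝ) := by linarith
  have hs2n : 0 < Real.sqrt (2 * (n:ℝ)) := Real.sqrt_pos.2 (by positivity)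
  have hrp0 : (0:ℝ) < rp := lt_trans h0 hr
  have hαpos : 0 < α := by
    rw [hα]
    exact div_pos (by positivity) (mul_pos (mul_pos (mul_pos (by norm_num) hrp0) hnpos) hs2n)
  obtain ⟨hxA, hact⟩ := frontier_active hx
  have hrmp : rm ≤ rp := le_of_lt hr
  have hcm : 0 < cMin x := cMin_pos h0 hxA
  have hcM : 0 < cMax x := cMax_pos h0 hxA
  have hs3 := sqrt3_pos
  -- numeric facts
  have hs4 : (2:ℝ) ≤ Real.sqrt (2 * (n:ℝ)) := by
    nlinarith [Real.sq_sqrt (show (0:ℝ) ≤ 2 * (n:ℝ) by positivity),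
      Real.sqrt_nonneg (2 * (n:ℝ)), hn2]
  have hs1 : 2 * Real.sqrt ((n:ℝ)+1) ≤ (n:ℝ) * Real.sqrt (2 * (n:ℝ)) := by
    have e1 : 2 * Real.sqrt ((n:ℝ)+1) = Real.sqrt (2^2 * ((n:ℝ)+1)) := by
      rw [Real.sqrt_mul (by norm_num), Real.sqrt_sq (by norm_num)]
    have e2 : Real.sqrt ((n:ℝ)^2 * (2 * (n:ℝ))) = (n:ℝ) * Real.sqrt (2 * (n:ℝ)) := by
      rw [Real.sqrt_mul (by positivity), Real.sqrt_sq (by positivity)]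
    rw [e1, ← e2]
    apply Real.sqrt_le_sqrt
    nlinarith [hn2, sq_nonneg ((n:ℝ) - 2)]
  have hrmne : rm ≠ 0 := ne_of_gt h0
  have hrpne : rp ≠ 0 := ne_of_gt hrp0
  have hnne : (n:ℝ) ≠ 0 := ne_of_gt hnpos
  have hsne : Real.sqrt (2 * (n:ℝ)) ≠ 0 := ne_of_gt hs2n
  have hkey1 : 2 * α * (2 * Real.sqrt ((n:ℝ)+1) / rm) ≤ 1 := by
    set q := Real.sqrt ((n:ℝ)+1) with hq
    set s := Real.sqrt (2 * (n:ℝ)) with hsdef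
    have e : 2 * α * (2 * q / rm) = (2 * rm * q) / (rp * (n:ℝ) * s) := by
      rw [hα]
      field_simp
    rw [e, div_le_one (by positivity)]
    nlinarith [hs1, Real.sqrt_nonneg ((n:ℝ)+1), hs2n, hnpos, h0, hrmp]
  have hkey2 : 2 * α ≤ Real.sqrt 3 * rm := by
    have h31 : (1:ℝ) ≤ Real.sqrt 3 := by
      rw [show (1:ℝ) = Real.sqrt 1 by simp]
      exact Real.sqrt_le_sqrt (by norm_num)
    have hden : rm ≤ rp * (n:ℝ) * Real.sqrt (2 * (n:ℝ)) := by
      have hp1 : (0:ℝ) ≤ ((n:ℝ) - 2) * (Real.sqrt (2 * (n:ℝ)) - 2) :=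
        mul_nonneg (by linarith) (by linarith)
      nlinarith [hrp0, hn2, hs4, hp1]
    set s := Real.sqrt (2 * (n:ℝ)) with hsdef
    have e : 2 * α = rm^2 / (rp * (n:ℝ) * s) := by
      rw [hα]
      field_simp
    rw [e]
    have h1 : rm^2 / (rp * (n:ℝ) * Real.sqrt (2 * (n:ℝ))) ≤ rm^2 / rm :=
      div_le_div_of_nonneg_left (by positivity) h0 hden
    have h2 : rm^2 / rm = rm := by
      rw [sq]
      field_simp
    nlinarith [h1, h2, h31, h0]
  -- the single-normal estimates give membership in the α-normal set
  have hsingle_min : ∀ (i : Fin n) (hi : (i:ℕ)+1 < n), ‖bv x i‖ = cMin x →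
      cnm x i hi ∈ normalSet (Ac d n rm rp) x α := by
    intro i hi hia
    refine ⟨norm_cnm x i hi hia hcm, (ball_inter_empty_iff (norm_cnm x i hi hia hcm) hαpos).2 ?_⟩
    intro y hy
    have hest := est_cnm hxA hy h0 i hi hia
    have hQ : ⟪cnm x i hi, x - y⟫ ≤ ‖x - y‖^2 / (Real.sqrt 3 * rm) := by
      refine le_trans hest ?_
      rw [← bv_sub]
      have h1 : ‖bv (x - y) i‖^2 ≤ 2 * ‖x - y‖^2 := bv_sq_le _ i
      have hrmle : rm ≤ cMin x := (mem_Ac_iff.1 hxA).1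
      calc ‖bv (x - y) i‖^2 / (Real.sqrt 3 * (2 * cMin x))
          ≤ (2 * ‖x - y‖^2) / (Real.sqrt 3 * (2 * cMin x)) := by gcongr
        _ ≤ (2 * ‖x - y‖^2) / (Real.sqrt 3 * (2 * rm)) := by gcongr <;> positivity
        _ = ‖x - y‖^2 / (Real.sqrt 3 * rm) := by
            field_simp
    have hK0 : 0 ≤ ‖x - y‖^2 / (Real.sqrt 3 * rm) := by positivity
    have c1 : 2 * α * ⟪cnm x i hi, x - y⟫ ≤ 2 * α * (‖x - y‖^2 / (Real.sqrt 3 * rm)) :=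
      mul_le_mul_of_nonneg_left hQ (by positivity)
    have c2 : 2 * α * (‖x - y‖^2 / (Real.sqrt 3 * rm))
        ≤ (Real.sqrt 3 * rm) * (‖x - y‖^2 / (Real.sqrt 3 * rm)) :=
      mul_le_mul_of_nonneg_right hkey2 hK0
    have c3 : (Real.sqrt 3 * rm) * (‖x - y‖^2 / (Real.sqrt 3 * rm)) = ‖x - y‖^2 :=
      mul_div_cancel₀ _ (by positivity)
    linarith
  have hnonpos_mem : ∀ u : CConf d n, ‖u‖ = 1 →
      (∀ y ∈ Ac d n rm rp, ⟪u, x - y⟫ ≤ 0) → u ∈ normalSet (Ac d n rm rp) x α := by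
    intro u hu hle
    refine ⟨hu, (ball_inter_empty_iff hu hαpos).2 ?_⟩
    intro y hy
    have h1 : (0:ℝ) ≤ 2 * α := by linarith
    have h2 : 2 * α * ⟪u, x - y⟫ ≤ 0 := mul_nonpos_of_nonneg_of_nonpos h1 (hle y hy)
    linarith [sq_nonneg ‖x - y‖]
  have hne : (normalSet (Ac d n rm rp) x α).Nonempty := by
    rcases hact with h | h | h | ⟨i, hi, h | h⟩
    · exact ⟨cnmin d n, hnonpos_mem _ norm_cnmin (fun y hy => est_cnmin hy h)⟩
    · exact ⟨cnmax d n, hnonpos_mem _ norm_cnmax (fun y hy => est_cnmax hy h)⟩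
    · exact ⟨cneq d n, hnonpos_mem _ norm_cneq (fun y hy => est_cneq hy h)⟩
    · exact ⟨cnm x i hi, hsingle_min i hi h⟩
    · exact ⟨cnp x i hi, hnonpos_mem _ (norm_cnp x i hi h hcM)
        (fun y hy => est_cnp hxA hy h0 i hi h)⟩
  refine ⟨Set.Subset.antisymm ?_ ?_, hne⟩
  · -- the hard inclusion: every proximal normal has the uniform exterior ball
    intro v hv
    have hv' := hv
    simp only [normalCone, Set.mem_iUnion, Set.mem_Ioi] at hv'
    obtain ⟨β, hβ, hvn, hball⟩ := hv'
    -- v lies in the closure of the cone of active normals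
    have hdual : ∀ w, (∀ u ∈ Kone rm rp x, 0 ≤ ⟪u, w⟫) → 0 ≤ ⟪v, w⟫ := by
      intro w hw
      refine normal_dual h0 hr hxA hv w ?_ ?_ ?_ ?_ ?_
      · intro hactm
        have h1 := hw _ (cnmin_mem_Kone hactm)
        rwa [inner_cnmin] at h1
      · intro hactM
        have h1 := hw _ (cnmax_mem_Kone hactM)
        rw [inner_cnmax] at h1
        linarith
      · intro hacte
        have h1 := hw _ (cneq_mem_Kone hacte)
        rw [inner_cneq] at h1
        nlinarith [inv_pos.mpr sqrt2_pos, h1]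
      · intro i hi hia
        have h1 := hw _ (cnm_mem_Kone i hi hia)
        rw [inner_cnm] at h1
        set X := ⟪bv x i, bv w i⟫ with hX
        have ha : (0:ℝ) < cMin x * Real.sqrt 3 := by positivity
        have h2 := mul_le_mul_of_nonneg_left h1 (le_of_lt ha)
        rw [mul_zero, mul_sub] at h2
        have e1 : cMin x * Real.sqrt 3 * ((cMin x * Real.sqrt 3)⁻¹ * X) = X := by
          field_simp
        have e2 : cMin x * Real.sqrt 3 * ((Real.sqrt 3)⁻¹ * cMin w)
            = cMin x * cMin w := by
          field_simp
        rw [e1, e2] at h2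
        linarith
      · intro i hi hia
        have h1 := hw _ (cnp_mem_Kone i hi hia)
        rw [inner_cnp] at h1
        set X := ⟪bv x i, bv w i⟫ with hX
        have ha : (0:ℝ) < cMax x * Real.sqrt 3 := by positivity
        have h2 := mul_le_mul_of_nonneg_left h1 (le_of_lt ha)
        rw [mul_zero, mul_add, mul_neg] at h2
        have e1 : cMax x * Real.sqrt 3 * ((cMax x * Real.sqrt 3)⁻¹ * X) = X := by
          field_simp
        have e2 : cMax x * Real.sqrt 3 * ((Real.sqrt 3)⁻¹ * cMax w)
            = cMax x * cMax w := by
          field_simp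
        rw [e1, e2] at h2
        linarith
    have hclos : v ∈ closure (Kone rm rp x) :=
      mem_closure_cone (zero_mem_Kone x) (fun t ht u hu => Kone_smul ht hu)
        (Kone_convex x) hdual
    refine ⟨hvn, (ball_inter_empty_iff hvn hαpos).2 ?_⟩
    intro y hy
    have hest := closure_estimate h0 hr hxA hy hclos
    rw [hvn, one_mul] at hest
    have c1 : 2 * α * ⟪v, x - y⟫
        ≤ 2 * α * ((2 * Real.sqrt ((n:ℝ)+1) / rm) * ‖x - y‖^2) := by
      refine mul_le_mul_of_nonneg_left ?_ (by positivity)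
      exact hest
    have c2 : 2 * α * ((2 * Real.sqrt ((n:ℝ)+1) / rm) * ‖x - y‖^2)
        = (2 * α * (2 * Real.sqrt ((n:ℝ)+1) / rm)) * ‖x - y‖^2 := by ring
    have c3 : (2 * α * (2 * Real.sqrt ((n:ℝ)+1) / rm)) * ‖x - y‖^2 ≤ 1 * ‖x - y‖^2 :=
      mul_le_mul_of_nonneg_right hkey1 (sq_nonneg _)
    calc 2 * α * ⟪v, x - y⟫
        ≤ (2 * α * (2 * Real.sqrt ((n:ℝ)+1) / rm)) * ‖x - y‖^2 := by
          rw [← c2]; exact c1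
      _ ≤ 1 * ‖x - y‖^2 := c3
      _ = ‖x - y‖^2 := one_mul _
  · -- the easy inclusion
    intro v hv
    simp only [normalCone, Set.mem_iUnion, Set.mem_Ioi]
    exact ⟨α, hαpos, hv⟩
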